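/- arXiv:2106.02129 — 4 statements merged into one kernel-verified Lean document; each statement's English description precedes it below -/
import Mathlib

section
/- Let n, m, k, D be positive integers and δ, η, ν ∈ [0,1], γ ≥ 1. If there exists a random degree-D polynomial that (δ, γ, η, ν)-solves Φ_k(n,m), then there exists a deterministic degree-D polynomial that (3δ, 3γ, η, ν)-solves Φ_k(n,m). -/
open MeasureTheory Finset Filter ProbabilityTheory

universe u

/-! ## k-SAT basics -/

/-- A `k`-SAT formula on `n` variables with `m` clauses: each clause is an ordered
`k`-tuple of literals, a literal being a pair (variable index, polarity). -/
abbrev Formula (n m k : ℕ) := Fin m → Fin k → Fin n × Bool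

/-- An assignment satisfies a clause if some literal of the clause is satisfied. -/
def satClause {n k : ℕ} (x : Fin n → Bool) (C : Fin k → Fin n × Bool) : Prop :=
  ∃ j : Fin k, x (C j).1 = (C j).2

/-- Normalized Hamming distance. -/
noncomputable def hamΔ {n : ℕ} {α : Type*} (x y : Fin n → α) : ℝ :=
  (Nat.card {i : Fin n // x i ≠ y i} : ℝ) / n

/-- `x` ν-satisfies `Φ` if it satisfies at least `(1-ν)m` clauses. -/
def nuSat {n m k : ℕ} (x : Fin n → Bool) (Φ : Formula n m k) (ν : ℝ) : Prop :=
  (1 - ν) * m ≤ (Nat.card {i : Fin m // satClause x (Φ i)} : ℝ)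

/-- `x ∈ {T,F,err}^n` (η,ν)-satisfies `Φ` (`none` is the error symbol). -/
def etaNuSat {n m k : ℕ} (x : Fin n → Option Bool) (Φ : Formula n m k) (η ν : ℝ) : Prop :=
  ∃ y : Fin n → Bool, hamΔ x (fun i => some (y i)) ≤ η ∧ nuSat y Φ ν

/-! ## polynomials and solving -/

/-- Index set for the one-hot encoding of a formula, of cardinality `N = 2knm`. -/
abbrev Coords (n m k : ℕ) := Fin m × Fin k × (Fin n × Bool)

/-- One-hot encoding of a formula as a vector in `ℝ^N`. -/
def encode {n m k : ℕ} (Φ : Formula n m k) : Coords n m k → ℝ :=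
  fun p => if Φ p.1 p.2.1 = p.2.2 then 1 else 0

/-- `g` agrees with a real multivariate polynomial of total degree at most `D`. -/
def IsPolyDeg {σ : Type*} (D : ℕ) (g : (σ → ℝ) → ℝ) : Prop :=
  ∃ p : MvPolynomial σ ℝ, p.totalDegree ≤ D ∧ ∀ x, g x = MvPolynomial.eval x p

/-- `f : ℝ^N → ℝ^n` is a (deterministic) degree-`D` polynomial. -/
def IsDegPoly (n m k D : ℕ) (f : (Coords n m k → ℝ) → Fin n → ℝ) : Prop :=
  ∀ i : Fin n, IsPolyDeg D (fun x => f x i)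

open Classical in
/-- The rounding map: `T` if `x ≥ 1`, `F` if `x ≤ -1`, `err` otherwise. -/
noncomputable def roundR (x : ℝ) : Option Bool :=
  if 1 ≤ x then some true else if x ≤ -1 then some false else none

/-- Expectation over a uniformly random formula. -/
noncomputable def Eform (n m k : ℕ) (g : Formula n m k → ℝ) : ℝ :=
  (∑ Φ : Formula n m k, g Φ) / (Fintype.card (Formula n m k) : ℝ)

open Classical in
/-- Probability over a uniformly random formula. -/
noncomputable def Pform (n m k : ℕ) (A : Formula n m k → Prop) : ℝ :=
  Eform n m k (fun Φ => if A Φ then 1 else 0)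

/-- A deterministic degree-`D` polynomial `(δ,γ,η,ν)`-solves random `k`-SAT. -/
def DetSolves (n m k D : ℕ) (f : (Coords n m k → ℝ) → Fin n → ℝ) (δ γ η ν : ℝ) : Prop :=
  IsDegPoly n m k D f ∧
  1 - δ ≤ Pform n m k (fun Φ => etaNuSat (fun i => roundR (f (encode Φ) i)) Φ η ν) ∧
  Eform n m k (fun Φ => ∑ i, (f (encode Φ) i) ^ 2) ≤ γ * n

/-- A random degree-`D` polynomial `(δ,γ,η,ν)`-solves random `k`-SAT: `μ` is a
probability measure, every slice is a degree-`D` polynomial with coefficients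
measurable in `ω`, and the success-probability and normalization conditions hold. -/
def RandomSolves (n m k D : ℕ) {Ω : Type u} [MeasurableSpace Ω] (μ : Measure Ω)
    (f : (Coords n m k → ℝ) → Ω → Fin n → ℝ) (δ γ η ν : ℝ) : Prop :=
  IsProbabilityMeasure μ ∧
  (∀ ω : Ω, IsDegPoly n m k D (fun x => f x ω)) ∧
  (∀ (x : Coords n m k → ℝ) (i : Fin n), Measurable (fun ω => f x ω i)) ∧
  (∀ Φ : Formula n m k, Integrable (fun ω => ∑ i, (f (encode Φ) ω i) ^ 2) μ) ∧
  1 - δ ≤ Eform n m k (fun Φ =>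
      (μ {ω | etaNuSat (fun i => roundR (f (encode Φ) ω i)) Φ η ν}).toReal) ∧
  Eform n m k (fun Φ => ∫ ω, (∑ i, (f (encode Φ) ω i) ^ 2) ∂μ) ≤ γ * n

/-! ## κ* -/

noncomputable def iota (β : ℝ) : ℝ := β / (1 - β * Real.exp (-(β - 1)))

noncomputable def kappaStar : ℝ := sInf (iota '' Set.Ioi 1)

/-! ## overlap profiles and entropies -/

/-- Binary entropy function (natural log, with `0·log 0 = 0`). -/
noncomputable def Hb (p : ℝ) : ℝ := Real.negMulLog p + Real.negMulLog (1 - p)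

/-- Number of coordinates whose agreement pattern is exactly `σ`. -/
noncomputable def patCount {n ℓ : ℕ} (Y : Fin ℓ → Fin n → Bool) (σ : Fin ℓ → Bool) : ℕ :=
  Nat.card {i : Fin n // ∀ t, Y t i = σ t}

/-- Entry of the overlap profile indexed by the unordered partition `{σ⁻¹(T), σ⁻¹(F)}`. -/
noncomputable def profFrac {n ℓ : ℕ} (Y : Fin ℓ → Fin n → Bool) (σ : Fin ℓ → Bool) : ℝ :=
  ((patCount Y σ : ℝ) + (patCount Y (fun t => !(σ t)) : ℝ)) / n

/-- Overlap entropy `H(π(Y))` (each unordered partition is counted twice in the sum,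
hence the factor `1/2`; valid for `ℓ ≥ 1` assignments). -/
noncomputable def overlapEntropy {n ℓ : ℕ} (Y : Fin ℓ → Fin n → Bool) : ℝ :=
  (1/2) * ∑ σ : Fin ℓ → Bool, Real.negMulLog (profFrac Y σ)

/-- The fraction `λ_{S,T}` of coordinates in the agreement set at which `x` is true. -/
noncomputable def lamFrac {n ℓ : ℕ} (x : Fin n → Bool) (Y : Fin ℓ → Fin n → Bool)
    (σ : Fin ℓ → Bool) : ℝ :=
  (Nat.card {i : Fin n // ((∀ t, Y t i = σ t) ∨ (∀ t, Y t i = !(σ t))) ∧ x i = true} : ℝ)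
    / ((patCount Y σ : ℝ) + (patCount Y (fun t => !(σ t)) : ℝ))

/-- Conditional overlap entropy `H(π(x | Y))`. -/
noncomputable def condOverlapEntropy {n ℓ : ℕ} (x : Fin n → Bool)
    (Y : Fin ℓ → Fin n → Bool) : ℝ :=
  (1/2) * ∑ σ : Fin ℓ → Bool, profFrac Y σ * Hb (lamFrac x Y σ)

/-- `H(π(y^ℓ | y^0, …, y^{ℓ-1}))` for an `ℕ`-indexed family of assignments. -/
noncomputable def condH {n : ℕ} (y : ℕ → Fin n → Bool) (ℓ : ℕ) : ℝ :=
  condOverlapEntropy (y ℓ) (fun t : Fin ℓ => y (t : ℕ))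

/-- `H(π(y^0, …, y^k))`. -/
noncomputable def ovH {n : ℕ} (y : ℕ → Fin n → Bool) (k : ℕ) : ℝ :=
  overlapEntropy (fun t : Fin (k+1) => y (t : ℕ))

/-- The energy term `E_{I ~ unif([n]^k)} |{y^ℓ[I] : 0 ≤ ℓ ≤ k}|`. -/
noncomputable def energy {n : ℕ} (k : ℕ) (y : ℕ → Fin n → Bool) : ℝ :=
  (∑ I : Fin k → Fin n,
      (((Finset.range (k+1)).image (fun ℓ => fun r => y ℓ (I r))).card : ℝ))
    / (Fintype.card (Fin k → Fin n) : ℝ)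

/-- Conditional overlap entropies of `y^1, …, y^k` within `[β₋ log k / k, β₊ log k / k]`. -/
def Admissible {n : ℕ} (k : ℕ) (βm βp : ℝ) (y : ℕ → Fin n → Bool) : Prop :=
  ∀ ℓ, 1 ≤ ℓ → ℓ ≤ k →
    condH y ℓ ∈ Set.Icc (βm * Real.log k / k) (βp * Real.log k / k)

/-! ## the interpolation path -/

/-- The interpolation path: step `t+1` resamples the literal at lexicographic
position `t % (km)` (0-indexed: clause `(t % km)/k`, position `(t % km) % k`)
to the value `w ⟨t, _⟩`. -/
def interpPath {n m k T : ℕ} (Φ0 : Formula n m k) (w : Fin T → Fin n × Bool) :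
    ℕ → Formula n m k
  | 0 => Φ0
  | t + 1 => fun a b =>
      if h : t < T ∧ (a : ℕ) = t % (k * m) / k ∧ (b : ℕ) = t % (k * m) % k
      then w ⟨t, h.1⟩
      else interpPath Φ0 w t a b

open Classical in
/-- Probability of an event of the interpolation path `Φ^(0), …, Φ^(T)`, where
`Φ^(0)` is uniform and all resampled literals are i.i.d. uniform. -/
noncomputable def Ppath (n m k T : ℕ) (A : (ℕ → Formula n m k) → Prop) : ℝ :=
  (∑ z : Formula n m k × (Fin T → Fin n × Bool),
      if A (interpPath z.1 z.2) then (1:ℝ) else 0)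
    / (Fintype.card (Formula n m k × (Fin T → Fin n × Bool)) : ℝ)

/-! ## stability of low-degree polynomials -/

/-- The pair `(Φ, Φ')` is `c`-bad with respect to `f`. -/
def cBad {n m k : ℕ} (f : (Coords n m k → ℝ) → Fin n → ℝ) (c : ℝ)
    (Φ Φ' : Formula n m k) : Prop :=
  c * Eform n m k (fun Ψ => ∑ i, (f (encode Ψ) i) ^ 2) <
    ∑ i, (f (encode Φ) i - f (encode Φ') i) ^ 2

/-- Replace the literal of `Φ` in clause `a`, position `b`, by `L`. -/
def updLit {n m k : ℕ} (Φ : Formula n m k) (a : Fin m) (b : Fin k)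
    (L : Fin n × Bool) : Formula n m k :=
  fun i j => if i = a ∧ j = b then L else Φ i j

open Classical in
/-- `λ_j`: the probability that resampling the literal at clause `a`, position `b`
(uniformly among the `2n-1` other literals) produces a `c`-bad pair. -/
noncomputable def lambdaPos {n m k : ℕ} (f : (Coords n m k → ℝ) → Fin n → ℝ) (c : ℝ)
    (a : Fin m) (b : Fin k) : ℝ :=
  (∑ Φ : Formula n m k, ∑ L : Fin n × Bool,
      if L ≠ Φ a b ∧ cBad f c Φ (updLit Φ a b L) then (1:ℝ) else 0)
    / ((Fintype.card (Formula n m k) : ℝ) * (2 * (n:ℝ) - 1))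

/-! ## the p/q quantities of the energy analysis -/

/-- The history vector `y^{≤j}_i = (y^1_i, …, y^j_i)`. -/
def hist {n : ℕ} (y : ℕ → Fin n → Bool) (j : ℕ) (i : Fin n) : Fin j → Bool :=
  fun t => y ((t : ℕ) + 1) i

/-- `φ_ℓ(b | ξ) = P_{i ~ unif([n])}[y^ℓ_i = b | y^{≤ℓ-1}_i = ξ]`. -/
noncomputable def phi {n : ℕ} (y : ℕ → Fin n → Bool) (ℓ : ℕ) (b : Bool)
    (ξ : Fin (ℓ - 1) → Bool) : ℝ :=
  (Nat.card {i : Fin n // y ℓ i = b ∧ hist y (ℓ - 1) i = ξ} : ℝ) /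
    (Nat.card {i : Fin n // hist y (ℓ - 1) i = ξ} : ℝ)

open Classical in
/-- `p_ℓ(σ) = P_{I ~ unif([n]^k)}[y^{ℓ'}[I] = σ for some 0 ≤ ℓ' ≤ ℓ]`. -/
noncomputable def pP {n : ℕ} (k : ℕ) (y : ℕ → Fin n → Bool) (ℓ : ℕ)
    (σ : Fin k → Bool) : ℝ :=
  (∑ I : Fin k → Fin n, if ∃ ℓ' ≤ ℓ, ∀ r, y ℓ' (I r) = σ r then (1:ℝ) else 0)
    / (Fintype.card (Fin k → Fin n) : ℝ)

open Classical in
/-- `Q_ℓ(σ, I)`: the truncated conditional probability that `y^ℓ[I] = σ`. -/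
noncomputable def Qfun {n k : ℕ} (y : ℕ → Fin n → Bool) (ℓ : ℕ) (σ : Fin k → Bool)
    (I : Fin k → Fin n) : ℝ :=
  if (∏ r, phi y ℓ (σ r) (hist y (ℓ - 1) (I r))) ≤ 1 / ((k:ℝ) * Real.log k)
  then ∏ r, phi y ℓ (σ r) (hist y (ℓ - 1) (I r)) else 0

/-- `q_ℓ(σ) = E_{I ~ unif([n]^k)}[Q_ℓ(σ, I)]`. -/
noncomputable def qfun {n k : ℕ} (y : ℕ → Fin n → Bool) (ℓ : ℕ) (σ : Fin k → Bool) : ℝ :=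
  (∑ I : Fin k → Fin n, Qfun y ℓ σ I) / (Fintype.card (Fin k → Fin n) : ℝ)

/-! ## lazy random walk on a product graph -/

/-- Lazy random walk on `Σ^J`: step `t+1` resamples coordinate `σ (t+1)` to `u ⟨t, _⟩`. -/
def walk {S : Type u} {J : Type*} [DecidableEq J] {T : ℕ} (v0 : J → S) (σ : ℕ → J)
    (u : Fin T → S) : ℕ → (J → S)
  | 0 => v0
  | t + 1 => if h : t < T then Function.update (walk v0 σ u t) (σ (t+1)) (u ⟨t, h⟩)
             else walk v0 σ u t

open Classical in
/-- `λ_j`: fraction of edges in direction `j` that are bad. -/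
noncomputable def lambdaDir {S : Type u} [Fintype S] {J : ℕ}
    (B : (Fin J → S) → (Fin J → S) → Prop) (j : Fin J) : ℝ :=
  (∑ v : Fin J → S, ∑ s : S,
      if s ≠ v j ∧ B v (Function.update v j s) then (1:ℝ) else 0)
    / ((Fintype.card (Fin J → S) : ℝ) * ((Fintype.card S : ℝ) - 1))

open Classical in
/-- Probability that no step of the lazy random walk traverses a bad edge. -/
noncomputable def PwalkGood {S : Type u} [Fintype S] (J T : ℕ)
    (B : (Fin J → S) → (Fin J → S) → Prop) (σ : ℕ → Fin J) : ℝ :=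
  (∑ z : (Fin J → S) × (Fin T → S),
      if ∀ t, 1 ≤ t → t ≤ T →
          (walk z.1 σ z.2 t = walk z.1 σ z.2 (t-1) ∨
           ¬ B (walk z.1 σ z.2 (t-1)) (walk z.1 σ z.2 t))
      then (1:ℝ) else 0)
    / (Fintype.card ((Fin J → S) × (Fin T → S)) : ℝ)

/-! ## block interpolation -/

/-- The index `i` of the segment `[s_i, s_{i+1})` containing `r`. -/
def psiIdx (s : ℕ → ℕ) (k r : ℕ) : ℕ := Nat.findGreatest (fun i => s i ≤ r) k

/-- `Ψ^ℓ`: concatenation of the blocks `ξ_i^{max(ℓ-i,0)}`, realized on the canonical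
product space of `(k+1)²` independent `μ^{⊗M}`-samples. -/
def Psi {Υ : Type u} (s : ℕ → ℕ) (k M : ℕ)
    (ω : Fin (k+1) × Fin (k+1) → Fin M → Υ) (ℓ : ℕ) : Fin M → Υ :=
  fun r => ω (⟨min (psiIdx s k (r : ℕ)) k, by omega⟩,
              ⟨min (ℓ - psiIdx s k (r : ℕ)) k, by omega⟩) r


lemma measurableSet_roundR_eq {Ω : Type*} [MeasurableSpace Ω] {g : Ω → ℝ}
    (hg : Measurable g) (c : Option Bool) : MeasurableSet {ω | roundR (g ω) = c} := by
  have h1 : MeasurableSet {ω | 1 ≤ g ω} := measurableSet_le measurable_const hg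
  have h2 : MeasurableSet {ω | g ω ≤ -1} := measurableSet_le hg measurable_const
  rcases c with _ | b
  · have he : {ω | roundR (g ω) = none} = {ω | 1 ≤ g ω}ᶜ ∩ {ω | g ω ≤ -1}ᶜ := by
      ext ω
      simp only [Set.mem_setOf_eq, roundR, Set.mem_inter_iff, Set.mem_compl_iff]
      split_ifs <;> simp_all
    rw [he]; exact h1.compl.inter h2.compl
  · cases b
    · have he : {ω | roundR (g ω) = some false} = {ω | 1 ≤ g ω}ᶜ ∩ {ω | g ω ≤ -1} := by
        ext ω
        simp only [Set.mem_setOf_eq, roundR, Set.mem_inter_iff, Set.mem_compl_iff]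
        split_ifs <;> simp_all
      rw [he]; exact h1.compl.inter h2
    · have he : {ω | roundR (g ω) = some true} = {ω | 1 ≤ g ω} := by
        ext ω
        simp only [Set.mem_setOf_eq, roundR]
        split_ifs <;> simp_all
      rw [he]; exact h1

theorem statement3 {Ω : Type u} [MeasurableSpace Ω] (μ : Measure Ω)
    (n m k D : ℕ) (hn : 0 < n) (hm : 0 < m) (hk : 0 < k) (hD : 0 < D)
    (δ γ η ν : ℝ) (hδ : δ ∈ Set.Icc (0:ℝ) 1) (hη : η ∈ Set.Icc (0:ℝ) 1)
    (hν : ν ∈ Set.Icc (0:ℝ) 1) (hγ : 1 ≤ γ)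
    (f : (Coords n m k → ℝ) → Ω → Fin n → ℝ)
    (hf : RandomSolves n m k D μ f δ γ η ν) :
    ∃ g : (Coords n m k → ℝ) → Fin n → ℝ,
      DetSolves n m k D g (3 * δ) (3 * γ) η ν := by
  classical
  obtain ⟨hprob, hpoly, hmeas, hint, hsucc, hnorm⟩ := hf
  obtain ⟨hδ0, hδ1⟩ := hδ
  have hγ0 : (0:ℝ) < γ := by linarith
  have hn' : (0:ℝ) < n := by exact_mod_cast hn
  have hcardpos : (0:ℝ) < (Fintype.card (Formula n m k) : ℝ) := by
    have : 0 < Fintype.card (Formula n m k) :=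
      Fintype.card_pos_iff.mpr ⟨fun _ _ => (⟨0, hn⟩, true)⟩
    exact_mod_cast this
  set A : Formula n m k → Set Ω :=
    fun Φ => {ω | etaNuSat (fun i => roundR (f (encode Φ) ω i)) Φ η ν} with hA
  have hAmeas : ∀ Φ, MeasurableSet (A Φ) := by
    intro Φ
    have hrepr : A Φ = ⋃ (v : Fin n → Option Bool) (_ : etaNuSat v Φ η ν),
        ⋂ i, {ω | roundR (f (encode Φ) ω i) = v i} := by
      ext ω
      simp only [hA, Set.mem_setOf_eq, Set.mem_iUnion, Set.mem_iInter]
      constructor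
      · intro h
        exact ⟨fun i => roundR (f (encode Φ) ω i), h, fun i => rfl⟩
      · rintro ⟨v, hv, he⟩
        have hve : (fun i => roundR (f (encode Φ) ω i)) = v := funext he
        rw [hve]; exact hv
    rw [hrepr]
    exact MeasurableSet.iUnion fun v => MeasurableSet.iUnion fun _ =>
      MeasurableSet.iInter fun i => measurableSet_roundR_eq (hmeas _ i) (v i)
  set S : Ω → ℝ := fun ω =>
    Pform n m k (fun Φ => etaNuSat (fun i => roundR (f (encode Φ) ω i)) Φ η ν) with hS
  set Nrm : Ω → ℝ := fun ω => Eform n m k (fun Φ => ∑ i, (f (encode Φ) ω i) ^ 2) with hNrm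
  have hindeq : ∀ Φ, (fun ω =>
      if etaNuSat (fun i => roundR (f (encode Φ) ω i)) Φ η ν then (1:ℝ) else 0)
      = (A Φ).indicator (fun _ => (1:ℝ)) := by
    intro Φ
    funext ω
    simp [Set.indicator_apply, hA]
  have hind : ∀ Φ : Formula n m k, Integrable (fun ω =>
      if etaNuSat (fun i => roundR (f (encode Φ) ω i)) Φ η ν then (1:ℝ) else 0) μ := by
    intro Φ
    rw [hindeq Φ]
    exact (integrable_const (1:ℝ)).indicator (hAmeas Φ)
  have hSdef : S = fun ω => (∑ Φ : Formula n m k,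
      if etaNuSat (fun i => roundR (f (encode Φ) ω i)) Φ η ν then (1:ℝ) else 0)
        / (Fintype.card (Formula n m k) : ℝ) := rfl
  have hSmeas : Measurable S := by
    rw [hSdef]
    apply Measurable.div_const
    apply Finset.measurable_sum
    intro Φ _
    rw [hindeq Φ]
    exact measurable_const.indicator (hAmeas Φ)
  have hS01 : ∀ ω, 0 ≤ S ω ∧ S ω ≤ 1 := by
    intro ω
    rw [hSdef]
    constructor
    · apply div_nonneg _ hcardpos.le
      apply Finset.sum_nonneg
      intro Φ _; split_ifs <;> norm_num
    · rw [div_le_one hcardpos]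
      calc (∑ Φ : Formula n m k,
          if etaNuSat (fun i => roundR (f (encode Φ) ω i)) Φ η ν then (1:ℝ) else 0)
          ≤ ∑ _Φ : Formula n m k, (1:ℝ) := by
            apply Finset.sum_le_sum; intro Φ _; split_ifs <;> norm_num
        _ = (Fintype.card (Formula n m k) : ℝ) := by
            simp [Finset.card_univ]
  have hSint : Integrable S μ := by
    apply Integrable.mono' (integrable_const (1:ℝ)) hSmeas.aestronglyMeasurable
    filter_upwards with ω
    rw [Real.norm_eq_abs, abs_of_nonneg (hS01 ω).1]
    exact (hS01 ω).2
  have hSint_eq : ∫ ω, S ω ∂μ = Eform n m k (fun Φ => (μ (A Φ)).toReal) := by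
    rw [hSdef]
    rw [integral_div, integral_finset_sum _ (fun Φ _ => hind Φ)]
    have key : ∀ Φ : Formula n m k, ∫ ω, (if etaNuSat (fun i => roundR (f (encode Φ) ω i)) Φ η ν
        then (1:ℝ) else 0) ∂μ = (μ (A Φ)).toReal := by
      intro Φ
      rw [hindeq Φ]
      have := integral_indicator_const (1:ℝ) (hAmeas Φ) (μ := μ)
      simpa [measureReal_def] using this
    rw [Finset.sum_congr rfl (fun Φ _ => key Φ)]
    rfl
  have hSge : 1 - δ ≤ ∫ ω, S ω ∂μ := by rw [hSint_eq]; exact hsucc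
  have hNdef : Nrm = fun ω => (∑ Φ : Formula n m k, ∑ i, (f (encode Φ) ω i) ^ 2)
      / (Fintype.card (Formula n m k) : ℝ) := rfl
  have hNint : Integrable Nrm μ := by
    rw [hNdef]
    exact (integrable_finset_sum _ (fun Φ _ => hint Φ)).div_const _
  have hN_eq : ∫ ω, Nrm ω ∂μ
      = Eform n m k (fun Φ => ∫ ω, (∑ i, (f (encode Φ) ω i) ^ 2) ∂μ) := by
    rw [hNdef, integral_div, integral_finset_sum _ (fun Φ _ => hint Φ)]
    rfl
  have hNnonneg : ∀ ω, 0 ≤ Nrm ω := by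
    intro ω
    rw [hNdef]
    apply div_nonneg _ hcardpos.le
    apply Finset.sum_nonneg
    intro Φ _
    exact Finset.sum_nonneg fun i _ => sq_nonneg _
  have hNle : ∫ ω, Nrm ω ∂μ ≤ γ * n := by rw [hN_eq]; exact hnorm
  -- Markov for the norm
  have hB2 : (μ {ω | 3 * γ * n ≤ Nrm ω}).toReal ≤ 1/3 := by
    have hmk := mul_meas_ge_le_integral_of_nonneg (μ := μ)
      (ae_of_all μ hNnonneg) hNint (3 * γ * n)
    rw [measureReal_def] at hmk
    set t := (μ {ω | 3 * γ * n ≤ Nrm ω}).toReal with ht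
    have ht0 : 0 ≤ t := ENNReal.toReal_nonneg
    nlinarith [mul_pos hγ0 hn']
  -- bound on failure probability
  have hB1 : (μ {ω | S ω < 1 - 3 * δ}).toReal ≤ 1/3 := by
    have hsubint : Integrable (fun ω => 1 - S ω) μ := (integrable_const (1:ℝ)).sub hSint
    have hint1 : ∫ ω, (1 - S ω) ∂μ = 1 - ∫ ω, S ω ∂μ := by
      rw [integral_sub (integrable_const 1) hSint, integral_const]
      simp
    rcases eq_or_lt_of_le hδ0 with h0 | h0
    · -- δ = 0
      have hzero : ∫ ω, (1 - S ω) ∂μ = 0 := by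
        apply le_antisymm
        · rw [hint1]; rw [← h0] at hSge; linarith
        · exact integral_nonneg fun ω => by simp; linarith [(hS01 ω).2]
      have hae : (fun ω => 1 - S ω) =ᵐ[μ] 0 :=
        (integral_eq_zero_iff_of_nonneg
          (fun ω => by simp only [Pi.zero_apply]; linarith [(hS01 ω).2]) hsubint).mp hzero
      have hae' : ∀ᵐ ω ∂μ, ¬ (S ω < 1 - 3 * δ) := by
        filter_upwards [hae] with ω hω
        simp only [Pi.zero_apply] at hω
        intro hc
        rw [← h0] at hc
        simp only [mul_zero, sub_zero] at hc
        linarith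
      have hμ0 : μ {ω | S ω < 1 - 3 * δ} = 0 := by
        have := ae_iff.mp hae'
        simp only [not_not] at this
        exact this
      rw [hμ0]
      norm_num
    · -- δ > 0
      have hmk := mul_meas_ge_le_integral_of_nonneg (μ := μ)
        (f := fun ω => 1 - S ω) (ae_of_all μ fun ω => by show (0:ℝ) ≤ 1 - S ω; linarith [(hS01 ω).2])
        hsubint (3 * δ)
      rw [measureReal_def] at hmk
      have hsub : {ω | S ω < 1 - 3 * δ} ⊆ {ω | 3 * δ ≤ 1 - S ω} := by
        intro ω hω
        simp only [Set.mem_setOf_eq] at *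
        linarith
      have hmono : (μ {ω | S ω < 1 - 3 * δ}).toReal ≤ (μ {ω | 3 * δ ≤ 1 - S ω}).toReal :=
        ENNReal.toReal_mono (measure_ne_top μ _) (measure_mono hsub)
      set t := (μ {ω | 3 * δ ≤ 1 - S ω}).toReal with ht
      have ht0 : 0 ≤ t := ENNReal.toReal_nonneg
      have hkey : 3 * δ * t ≤ δ := by rw [hint1] at hmk; linarith
      nlinarith
  -- find a good ω
  have hcompl : ∃ ω, ¬ (S ω < 1 - 3 * δ) ∧ ¬ (3 * γ * n < Nrm ω) := by
    by_contra h
    push_neg at h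
    have hcover : (Set.univ : Set Ω) ⊆ {ω | S ω < 1 - 3 * δ} ∪ {ω | 3 * γ * n ≤ Nrm ω} := by
      intro ω _
      by_cases hc : S ω < 1 - 3 * δ
      · exact Or.inl hc
      · exact Or.inr (le_of_lt (h ω (not_lt.mp hc)))
    have hle := le_trans (measure_mono hcover)
      (measure_union_le (μ := μ) {ω | S ω < 1 - 3 * δ} {ω | 3 * γ * n ≤ Nrm ω})
    have hle' := ENNReal.toReal_mono
      (ENNReal.add_ne_top.mpr ⟨measure_ne_top μ _, measure_ne_top μ _⟩) hle
    rw [ENNReal.toReal_add (measure_ne_top μ _) (measure_ne_top μ _)] at hle'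
    simp only [measure_univ, ENNReal.toReal_one] at hle'
    linarith
  obtain ⟨ω0, hω1, hω2⟩ := hcompl
  refine ⟨fun x => f x ω0, hpoly ω0, ?_, ?_⟩
  · exact not_lt.mp hω1
  · exact not_lt.mp hω2
end

section
/- Let n ≥ 1 and ℓ ≥ 1 be integers and let x, x', y^0,…,y^{ℓ−1} ∈ {T,F}^n. If Δ(x,x') ≤ 1/2, then |H(π(x | y^0,…,y^{ℓ−1})) − H(π(x' | y^0,…,y^{ℓ−1}))| ≤ H_b(Δ(x,x')). -/
open MeasureTheory Finset Filter ProbabilityTheory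

universe u

section statement8aux

open Real Finset

private lemma my_binE_subadd (a b : ℝ) (ha : 0 ≤ a) (hb : 0 ≤ b) (hab : a + b ≤ 1) :
    binEntropy (a + b) ≤ binEntropy a + binEntropy b := by
  rcases eq_or_lt_of_le ha with rfl | ha'
  · simp
  rcases eq_or_lt_of_le hb with rfl | hb'
  · simp
  have hc : 0 < a + b := by linarith
  have conc := Real.strictConcave_binEntropy.concaveOn
  have h1 : (b/(a+b)) • binEntropy 0 + (a/(a+b)) • binEntropy (a+b)
      ≤ binEntropy ((b/(a+b)) • (0:ℝ) + (a/(a+b)) • (a+b)) := by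
    apply conc.2 (by constructor <;> norm_num) ⟨hc.le, hab⟩
      (by positivity) (by positivity) (by field_simp; try ring)
  have h2 : (a/(a+b)) • binEntropy 0 + (b/(a+b)) • binEntropy (a+b)
      ≤ binEntropy ((a/(a+b)) • (0:ℝ) + (b/(a+b)) • (a+b)) := by
    apply conc.2 (by constructor <;> norm_num) ⟨hc.le, hab⟩
      (by positivity) (by positivity) (by field_simp; try ring)
  have e1 : (b/(a+b)) • (0:ℝ) + (a/(a+b)) • (a+b) = a := by
    rw [smul_eq_mul, smul_eq_mul, mul_zero, zero_add, div_mul_cancel₀ _ hc.ne']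
  have e2 : (a/(a+b)) • (0:ℝ) + (b/(a+b)) • (a+b) = b := by
    rw [smul_eq_mul, smul_eq_mul, mul_zero, zero_add, div_mul_cancel₀ _ hc.ne']
  rw [e1] at h1; rw [e2] at h2
  simp only [binEntropy_zero, smul_eq_mul, mul_zero, zero_add] at h1 h2
  have : (a/(a+b)) * binEntropy (a+b) + (b/(a+b)) * binEntropy (a+b)
      = binEntropy (a+b) := by field_simp
  linarith

private lemma my_binE_diff_le (p q : ℝ) (hp : p ∈ Set.Icc (0:ℝ) 1)
    (hq : q ∈ Set.Icc (0:ℝ) 1) (hpq : p ≤ q) :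
    |binEntropy p - binEntropy q| ≤ binEntropy (q - p) := by
  obtain ⟨hp0, hp1⟩ := hp
  obtain ⟨hq0, hq1⟩ := hq
  rw [abs_sub_le_iff]
  constructor
  · have : binEntropy (1 - p) ≤ binEntropy (1 - q) + binEntropy (q - p) := by
      have := my_binE_subadd (1 - q) (q - p) (by linarith) (by linarith) (by linarith)
      simpa [show (1:ℝ) - q + (q - p) = 1 - p by ring] using this
    rw [binEntropy_one_sub, binEntropy_one_sub] at this
    linarith
  · have := my_binE_subadd p (q - p) hp0 (by linarith) (by linarith)
    simp only [show p + (q - p) = q by ring] at this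
    linarith

private lemma my_binE_diff (p q : ℝ) (hp : p ∈ Set.Icc (0:ℝ) 1)
    (hq : q ∈ Set.Icc (0:ℝ) 1) :
    |binEntropy p - binEntropy q| ≤ binEntropy |p - q| := by
  rcases le_total p q with hpq | hpq
  · rw [show |p - q| = q - p from by rw [abs_of_nonpos (by linarith), neg_sub]]
    exact my_binE_diff_le p q hp hq hpq
  · rw [show |p - q| = p - q from abs_of_nonneg (by linarith), abs_sub_comm]
    exact my_binE_diff_le q p hq hp hpq

private lemma my_binE_mono {s d : ℝ} (h0 : 0 ≤ s) (hsd : s ≤ d) (hd : d ≤ 1/2) :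
    binEntropy s ≤ binEntropy d :=
  Real.binEntropy_strictMonoOn.monotoneOn
    ⟨h0, by rw [show (2:ℝ)⁻¹ = 1/2 by norm_num]; linarith⟩
    ⟨by linarith, by rw [show (2:ℝ)⁻¹ = 1/2 by norm_num]; linarith⟩ hsd

variable {n ℓ : ℕ}

private lemma my_patCount_eq (Y : Fin ℓ → Fin n → Bool) (σ : Fin ℓ → Bool) :
    patCount Y σ = (Finset.univ.filter (fun i : Fin n => ∀ t, Y t i = σ t)).card := by
  rw [patCount, Nat.card_eq_fintype_card, Fintype.card_subtype]

private lemma my_sumPat (Y : Fin ℓ → Fin n → Bool) :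
    ∑ σ : Fin ℓ → Bool, patCount Y σ = n := by
  classical
  have h1 : ∀ σ : Fin ℓ → Bool, patCount Y σ =
      (Finset.univ.filter (fun i : Fin n => (fun t => Y t i) = σ)).card := by
    intro σ
    rw [my_patCount_eq]
    congr 1
    ext i
    simp [funext_iff]
  calc ∑ σ : Fin ℓ → Bool, patCount Y σ
      = ∑ σ : Fin ℓ → Bool,
          (Finset.univ.filter (fun i : Fin n => (fun t => Y t i) = σ)).card :=
        Finset.sum_congr rfl (fun σ _ => h1 σ)
    _ = (Finset.univ : Finset (Fin n)).card :=
        (Finset.card_eq_sum_card_fiberwise (fun i _ => Finset.mem_univ _)).symm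
    _ = n := by simp

private lemma my_sumPatNeg (Y : Fin ℓ → Fin n → Bool) :
    ∑ σ : Fin ℓ → Bool, patCount Y (fun t => !(σ t)) = n := by
  classical
  refine Eq.trans ?_ (my_sumPat Y)
  apply Fintype.sum_bijective (fun σ : Fin ℓ → Bool => fun t => !(σ t))
  · exact Function.Involutive.bijective (fun σ => by funext t; simp)
  · intro σ; rfl

private lemma my_inner_two (hℓ : 1 ≤ ℓ) (Y : Fin ℓ → Fin n → Bool) (i : Fin n) :
    ∑ σ : Fin ℓ → Bool,
      (if (∀ t, Y t i = σ t) ∨ (∀ t, Y t i = !(σ t)) then (1:ℕ) else 0) = 2 := by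
  classical
  rw [← Finset.card_filter]
  have hset : Finset.univ.filter
      (fun σ : Fin ℓ → Bool => (∀ t, Y t i = σ t) ∨ (∀ t, Y t i = !(σ t)))
      = {fun t => Y t i, fun t => !(Y t i)} := by
    ext σ
    simp only [Finset.mem_filter, Finset.mem_univ, true_and, Finset.mem_insert,
      Finset.mem_singleton]
    constructor
    · rintro (h | h)
      · left; funext t; exact (h t).symm
      · right; funext t
        have := h t
        cases hσ : σ t <;> simp [hσ] at this <;> simp [this]
    · rintro (rfl | rfl)
      · left; intro t; rfl
      · right; intro t; simp
  rw [hset]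
  rw [Finset.card_insert_of_notMem, Finset.card_singleton]
  intro hc
  rw [Finset.mem_singleton] at hc
  have := congrFun hc ⟨0, hℓ⟩
  simp at this

private lemma my_sumD (hℓ : 1 ≤ ℓ) (Y : Fin ℓ → Fin n → Bool) (x x' : Fin n → Bool) :
    ∑ σ : Fin ℓ → Bool,
      (Finset.univ.filter (fun i : Fin n =>
        ((∀ t, Y t i = σ t) ∨ (∀ t, Y t i = !(σ t))) ∧ x i ≠ x' i)).card
    = 2 * (Finset.univ.filter (fun i : Fin n => x i ≠ x' i)).card := by
  classical
  have h1 : ∀ σ : Fin ℓ → Bool,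
      (Finset.univ.filter (fun i : Fin n =>
        ((∀ t, Y t i = σ t) ∨ (∀ t, Y t i = !(σ t))) ∧ x i ≠ x' i)).card
      = ∑ i ∈ Finset.univ.filter (fun i : Fin n => x i ≠ x' i),
          (if (∀ t, Y t i = σ t) ∨ (∀ t, Y t i = !(σ t)) then (1:ℕ) else 0) := by
    intro σ
    rw [← Finset.card_filter, Finset.filter_filter]
    congr 1
    ext i
    simp [and_comm]
  rw [Finset.sum_congr rfl (fun σ _ => h1 σ), Finset.sum_comm]
  rw [Finset.sum_congr rfl (fun i _ => my_inner_two hℓ Y i)]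
  rw [Finset.sum_const, smul_eq_mul, mul_comm]

private lemma my_lamNum_eq (x : Fin n → Bool) (Y : Fin ℓ → Fin n → Bool)
    (σ : Fin ℓ → Bool) :
    Nat.card {i : Fin n //
        ((∀ t, Y t i = σ t) ∨ (∀ t, Y t i = !(σ t))) ∧ x i = true}
      = (Finset.univ.filter (fun i : Fin n =>
          ((∀ t, Y t i = σ t) ∨ (∀ t, Y t i = !(σ t))) ∧ x i = true)).card := by
  rw [Nat.card_eq_fintype_card, Fintype.card_subtype]

private lemma my_lamNum_le (x : Fin n → Bool) (Y : Fin ℓ → Fin n → Bool)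
    (σ : Fin ℓ → Bool) :
    Nat.card {i : Fin n //
        ((∀ t, Y t i = σ t) ∨ (∀ t, Y t i = !(σ t))) ∧ x i = true}
      ≤ patCount Y σ + patCount Y (fun t => !(σ t)) := by
  classical
  rw [my_lamNum_eq, my_patCount_eq, my_patCount_eq]
  calc (Finset.univ.filter (fun i : Fin n =>
          ((∀ t, Y t i = σ t) ∨ (∀ t, Y t i = !(σ t))) ∧ x i = true)).card
      ≤ ((Finset.univ.filter (fun i : Fin n => ∀ t, Y t i = σ t)) ∪
          (Finset.univ.filter (fun i : Fin n => ∀ t, Y t i = !(σ t)))).card := by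
        apply Finset.card_le_card
        intro i hi
        simp only [Finset.mem_filter, Finset.mem_univ, true_and,
          Finset.mem_union] at *
        tauto
    _ ≤ _ := Finset.card_union_le _ _

private lemma my_lam_mem (x : Fin n → Bool) (Y : Fin ℓ → Fin n → Bool)
    (σ : Fin ℓ → Bool) : lamFrac x Y σ ∈ Set.Icc (0:ℝ) 1 := by
  have hden : (0:ℝ) ≤ (patCount Y σ : ℝ) + (patCount Y (fun t => !(σ t)) : ℝ) := by
    positivity
  rcases hden.eq_or_lt with h0 | hpos
  · rw [lamFrac, ← h0, div_zero]
    exact ⟨le_refl _, zero_le_one⟩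
  · rw [lamFrac]
    constructor
    · positivity
    · rw [div_le_one hpos]
      exact_mod_cast my_lamNum_le x Y σ

private lemma my_key (hn : 1 ≤ n) (x x' : Fin n → Bool) (Y : Fin ℓ → Fin n → Bool)
    (σ : Fin ℓ → Bool) :
    profFrac Y σ * |lamFrac x Y σ - lamFrac x' Y σ| ≤
      ((Finset.univ.filter (fun i : Fin n =>
        ((∀ t, Y t i = σ t) ∨ (∀ t, Y t i = !(σ t))) ∧ x i ≠ x' i)).card : ℝ) / n := by
  classical
  have hn0 : (0:ℝ) < n := by exact_mod_cast hn
  set Dc : ℕ := (Finset.univ.filter (fun i : Fin n =>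
      ((∀ t, Y t i = σ t) ∨ (∀ t, Y t i = !(σ t))) ∧ x i ≠ x' i)).card with hDc
  set T : ℕ := (Finset.univ.filter (fun i : Fin n =>
      ((∀ t, Y t i = σ t) ∨ (∀ t, Y t i = !(σ t))) ∧ x i = true)).card with hT
  set T' : ℕ := (Finset.univ.filter (fun i : Fin n =>
      ((∀ t, Y t i = σ t) ∨ (∀ t, Y t i = !(σ t))) ∧ x' i = true)).card with hT'
  have hNnn : (0:ℝ) ≤ (patCount Y σ : ℝ) + (patCount Y (fun t => !(σ t)) : ℝ) := by
    positivity
  have hlamx : lamFrac x Y σ =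
      (T : ℝ) / ((patCount Y σ : ℝ) + (patCount Y (fun t => !(σ t)) : ℝ)) := by
    rw [lamFrac, my_lamNum_eq]
  have hlamx' : lamFrac x' Y σ =
      (T' : ℝ) / ((patCount Y σ : ℝ) + (patCount Y (fun t => !(σ t)) : ℝ)) := by
    rw [lamFrac, my_lamNum_eq]
  have hsub : ∀ z z' : Fin n → Bool,
      (Finset.univ.filter (fun i : Fin n =>
        ((∀ t, Y t i = σ t) ∨ (∀ t, Y t i = !(σ t))) ∧ z i = true)).card
      ≤ (Finset.univ.filter (fun i : Fin n =>
        ((∀ t, Y t i = σ t) ∨ (∀ t, Y t i = !(σ t))) ∧ z' i = true)).card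
        + (Finset.univ.filter (fun i : Fin n =>
        ((∀ t, Y t i = σ t) ∨ (∀ t, Y t i = !(σ t))) ∧ z i ≠ z' i)).card := by
    intro z z'
    refine le_trans (Finset.card_le_card ?_) (Finset.card_union_le _ _)
    intro i hi
    simp only [Finset.mem_filter, Finset.mem_univ, true_and,
      Finset.mem_union] at *
    obtain ⟨hA, hz⟩ := hi
    by_cases hz' : z' i = true
    · exact Or.inl ⟨hA, hz'⟩
    · refine Or.inr ⟨hA, ?_⟩
      rw [hz]
      exact fun hc => hz' hc.symm
  have hDc' : (Finset.univ.filter (fun i : Fin n =>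
      ((∀ t, Y t i = σ t) ∨ (∀ t, Y t i = !(σ t))) ∧ x' i ≠ x i)).card = Dc := by
    rw [hDc]
    congr 1
    ext i
    simp [ne_comm]
  have h1 : T ≤ T' + Dc := hsub x x'
  have h2 : T' ≤ T + Dc := by
    have := hsub x' x
    rw [hDc'] at this
    exact this
  have habs : |(T:ℝ) - (T':ℝ)| ≤ (Dc:ℝ) := by
    rw [abs_sub_le_iff]
    constructor
    · have : (T:ℝ) ≤ (T':ℝ) + Dc := by exact_mod_cast h1
      linarith
    · have : (T':ℝ) ≤ (T:ℝ) + Dc := by exact_mod_cast h2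
      linarith
  rcases hNnn.eq_or_lt with h0 | hpos
  · rw [hlamx, hlamx', ← h0, div_zero, div_zero]
    simp only [sub_zero, abs_zero, mul_zero]
    positivity
  · have hprof : profFrac Y σ =
        ((patCount Y σ : ℝ) + (patCount Y (fun t => !(σ t)) : ℝ)) / n := rfl
    rw [hprof, hlamx, hlamx', div_sub_div_same, abs_div, abs_of_pos hpos]
    have hne : ((patCount Y σ : ℝ) + (patCount Y (fun t => !(σ t)) : ℝ)) ≠ 0 :=
      ne_of_gt hpos
    have hnne : (n:ℝ) ≠ 0 := ne_of_gt hn0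
    have heq : ((patCount Y σ : ℝ) + (patCount Y (fun t => !(σ t)) : ℝ)) / n *
        (|(T:ℝ) - (T':ℝ)| / ((patCount Y σ : ℝ) + (patCount Y (fun t => !(σ t)) : ℝ)))
        = |(T:ℝ) - (T':ℝ)| / n := by
      field_simp
    rw [heq]
    exact (div_le_div_iff_of_pos_right hn0).mpr habs

end statement8aux

theorem statement8 (n ℓ : ℕ) (hn : 1 ≤ n) (hℓ : 1 ≤ ℓ)
    (x x' : Fin n → Bool) (y : Fin ℓ → Fin n → Bool)
    (h : hamΔ x x' ≤ 1/2) :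
    |condOverlapEntropy x y - condOverlapEntropy x' y| ≤ Hb (hamΔ x x') := by
  classical
  have hn0 : (0:ℝ) < n := by exact_mod_cast hn
  have hHb : ∀ p : ℝ, Hb p = Real.binEntropy p := fun p => by
    rw [Hb]; exact (Real.binEntropy_eq_negMulLog_add_negMulLog_one_sub p).symm
  set D : (Fin ℓ → Bool) → ℕ := fun σ => (Finset.univ.filter (fun i : Fin n =>
      ((∀ t, y t i = σ t) ∨ (∀ t, y t i = !(σ t))) ∧ x i ≠ x' i)).card with hDdef
  set d : ℕ := (Finset.univ.filter (fun i : Fin n => x i ≠ x' i)).card with hddef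
  have hham : hamΔ x x' = (d : ℝ) / n := by
    rw [hamΔ, Nat.card_eq_fintype_card, Fintype.card_subtype]
  set δ : (Fin ℓ → Bool) → ℝ := fun σ => |lamFrac x y σ - lamFrac x' y σ| with hδdef
  set w : (Fin ℓ → Bool) → ℝ := fun σ => (1/2) * profFrac y σ with hwdef
  have hprofnn : ∀ σ, 0 ≤ profFrac y σ := fun σ => by
    rw [profFrac]; positivity
  have hwnn : ∀ σ, 0 ≤ w σ := fun σ => by
    rw [hwdef]; have := hprofnn σ; simp only []; positivity
  have hsumw : ∑ σ : Fin ℓ → Bool, w σ = 1 := by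
    rw [hwdef, ← Finset.mul_sum]
    have h2 : ∑ σ : Fin ℓ → Bool, profFrac y σ = 2 := by
      simp only [profFrac]
      rw [← Finset.sum_div, Finset.sum_add_distrib, ← Nat.cast_sum, ← Nat.cast_sum,
        my_sumPat, my_sumPatNeg]
      field_simp
      ring
    rw [h2]; norm_num
  have hδmem : ∀ σ, δ σ ∈ Set.Icc (0:ℝ) 1 := by
    intro σ
    obtain ⟨ha, hb⟩ := my_lam_mem x y σ
    obtain ⟨ha', hb'⟩ := my_lam_mem x' y σ
    refine ⟨abs_nonneg _, ?_⟩
    rw [hδdef]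
    rw [abs_sub_le_iff]
    constructor <;> linarith
  -- Step 1
  have hsplit : condOverlapEntropy x y - condOverlapEntropy x' y =
      ∑ σ : Fin ℓ → Bool,
        (1/2) * profFrac y σ * (Hb (lamFrac x y σ) - Hb (lamFrac x' y σ)) := by
    simp only [condOverlapEntropy]
    rw [← mul_sub, ← Finset.sum_sub_distrib, Finset.mul_sum]
    exact Finset.sum_congr rfl (fun σ _ => by ring)
  have step1 : |condOverlapEntropy x y - condOverlapEntropy x' y| ≤
      ∑ σ : Fin ℓ → Bool, w σ * Real.binEntropy (δ σ) := by
    rw [hsplit]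
    refine le_trans (Finset.abs_sum_le_sum_abs _ _) (Finset.sum_le_sum ?_)
    intro σ _
    rw [abs_mul, abs_of_nonneg (by have := hprofnn σ; positivity :
      (0:ℝ) ≤ 1/2 * profFrac y σ)]
    refine mul_le_mul_of_nonneg_left ?_ (by have := hprofnn σ; positivity)
    rw [hHb, hHb]
    exact my_binE_diff _ _ (my_lam_mem x y σ) (my_lam_mem x' y σ)
  -- Step 2 (Jensen)
  have step2 : ∑ σ : Fin ℓ → Bool, w σ * Real.binEntropy (δ σ) ≤
      Real.binEntropy (∑ σ : Fin ℓ → Bool, w σ * δ σ) := by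
    have := Real.strictConcave_binEntropy.concaveOn.le_map_sum
      (t := Finset.univ) (w := w) (p := δ)
      (fun σ _ => hwnn σ) hsumw (fun σ _ => hδmem σ)
    simpa only [smul_eq_mul] using this
  -- Step 3
  have step3 : ∑ σ : Fin ℓ → Bool, w σ * δ σ ≤ hamΔ x x' := by
    have hterm : ∀ σ : Fin ℓ → Bool, w σ * δ σ ≤ (1/2) * ((D σ : ℝ) / n) := by
      intro σ
      rw [hwdef, mul_assoc]
      exact mul_le_mul_of_nonneg_left (my_key hn x x' y σ) (by norm_num)
    calc ∑ σ : Fin ℓ → Bool, w σ * δ σ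
        ≤ ∑ σ : Fin ℓ → Bool, (1/2) * ((D σ : ℝ) / n) :=
          Finset.sum_le_sum (fun σ _ => hterm σ)
      _ = (1/2) * ((∑ σ : Fin ℓ → Bool, (D σ : ℝ)) / n) := by
          rw [← Finset.mul_sum, ← Finset.sum_div]
      _ = (d : ℝ) / n := by
          rw [← Nat.cast_sum, hDdef, hddef, my_sumD hℓ y x x']
          push_cast
          ring
      _ = hamΔ x x' := hham.symm
  have hs0 : 0 ≤ ∑ σ : Fin ℓ → Bool, w σ * δ σ :=
    Finset.sum_nonneg (fun σ _ => mul_nonneg (hwnn σ) (hδmem σ).1)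
  calc |condOverlapEntropy x y - condOverlapEntropy x' y|
      ≤ ∑ σ : Fin ℓ → Bool, w σ * Real.binEntropy (δ σ) := step1
    _ ≤ Real.binEntropy (∑ σ : Fin ℓ → Bool, w σ * δ σ) := step2
    _ ≤ Real.binEntropy (hamΔ x x') := my_binE_mono hs0 step3 h
    _ = Hb (hamΔ x x') := (hHb _).symm
end

section
/- With the notation below: for every σ ∈ {T,F}^k, p_k(σ) ≥ (1 − 1/log k)·Σ_{ℓ=1}^k q_ℓ(σ). -/
open MeasureTheory Finset Filter ProbabilityTheory

universe u

open Classical in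
lemma count_mul_phi {n : ℕ} (y : ℕ → Fin n → Bool) (ℓ : ℕ) (b : Bool)
    (ξ : Fin (ℓ - 1) → Bool) :
    ((Finset.univ.filter (fun i : Fin n => hist y (ℓ-1) i = ξ)).card : ℝ) * phi y ℓ b ξ
      = ((Finset.univ.filter
          (fun i : Fin n => y ℓ i = b ∧ hist y (ℓ-1) i = ξ)).card : ℝ) := by
  classical
  have hN : Nat.card {i : Fin n // hist y (ℓ-1) i = ξ}
      = (Finset.univ.filter (fun i : Fin n => hist y (ℓ-1) i = ξ)).card := by
    rw [Nat.card_eq_fintype_card, Fintype.card_subtype]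
  have hM : Nat.card {i : Fin n // y ℓ i = b ∧ hist y (ℓ-1) i = ξ}
      = (Finset.univ.filter (fun i : Fin n => y ℓ i = b ∧ hist y (ℓ-1) i = ξ)).card := by
    rw [Nat.card_eq_fintype_card, Fintype.card_subtype]
  have hle : (Finset.univ.filter (fun i : Fin n => y ℓ i = b ∧ hist y (ℓ-1) i = ξ)).card
      ≤ (Finset.univ.filter (fun i : Fin n => hist y (ℓ-1) i = ξ)).card := by
    apply Finset.card_le_card
    intro i hi
    simp only [Finset.mem_filter] at hi ⊢
    exact ⟨hi.1, hi.2.2⟩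
  rw [phi, hN, hM]
  by_cases h : (Finset.univ.filter (fun i : Fin n => hist y (ℓ-1) i = ξ)).card = 0
  · have h2 : (Finset.univ.filter
        (fun i : Fin n => y ℓ i = b ∧ hist y (ℓ-1) i = ξ)).card = 0 := by omega
    simp [h, h2]
  · field_simp

open Classical in
lemma keyEq {n k : ℕ} (y : ℕ → Fin n → Bool) (σ : Fin k → Bool) (ℓ : ℕ)
    (g : (Fin k → (Fin (ℓ-1) → Bool)) → ℝ) :
    ∑ I : Fin k → Fin n,
        (∏ r, phi y ℓ (σ r) (hist y (ℓ-1) (I r))) * g (fun r => hist y (ℓ-1) (I r))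
      = ∑ I : Fin k → Fin n,
        (if ∀ r, y ℓ (I r) = σ r then (1:ℝ) else 0) * g (fun r => hist y (ℓ-1) (I r)) := by
  classical
  rw [← Finset.sum_fiberwise Finset.univ
        (fun I : Fin k → Fin n => (fun r => hist y (ℓ-1) (I r)))
        (fun I => (∏ r, phi y ℓ (σ r) (hist y (ℓ-1) (I r))) * g (fun r => hist y (ℓ-1) (I r))),
      ← Finset.sum_fiberwise Finset.univ
        (fun I : Fin k → Fin n => (fun r => hist y (ℓ-1) (I r)))
        (fun I => (if ∀ r, y ℓ (I r) = σ r then (1:ℝ) else 0) * g (fun r => hist y (ℓ-1) (I r)))]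
  refine Finset.sum_congr rfl fun ξ _ => ?_
  have hmem : ∀ I ∈ Finset.univ.filter
      (fun I : Fin k → Fin n => (fun r => hist y (ℓ-1) (I r)) = ξ),
      ∀ r, hist y (ℓ-1) (I r) = ξ r := by
    intro I hI r
    simp only [Finset.mem_filter] at hI
    exact congrFun hI.2 r
  have lhs : ∑ I ∈ Finset.univ.filter
        (fun I : Fin k → Fin n => (fun r => hist y (ℓ-1) (I r)) = ξ),
        (∏ r, phi y ℓ (σ r) (hist y (ℓ-1) (I r))) * g (fun r => hist y (ℓ-1) (I r))
      = ((Finset.univ.filter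
          (fun I : Fin k → Fin n => (fun r => hist y (ℓ-1) (I r)) = ξ)).card : ℝ)
          * ((∏ r, phi y ℓ (σ r) (ξ r)) * g ξ) := by
    calc ∑ I ∈ Finset.univ.filter
          (fun I : Fin k → Fin n => (fun r => hist y (ℓ-1) (I r)) = ξ),
          (∏ r, phi y ℓ (σ r) (hist y (ℓ-1) (I r))) * g (fun r => hist y (ℓ-1) (I r))
        = ∑ _I ∈ Finset.univ.filter
          (fun I : Fin k → Fin n => (fun r => hist y (ℓ-1) (I r)) = ξ),
          (∏ r, phi y ℓ (σ r) (ξ r)) * g ξ :=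
          Finset.sum_congr rfl fun I hI => by simp only [hmem I hI]
      _ = _ := by rw [Finset.sum_const, nsmul_eq_mul]
  have rhs : ∑ I ∈ Finset.univ.filter
        (fun I : Fin k → Fin n => (fun r => hist y (ℓ-1) (I r)) = ξ),
        (if ∀ r, y ℓ (I r) = σ r then (1:ℝ) else 0) * g (fun r => hist y (ℓ-1) (I r))
      = ((Finset.univ.filter
          (fun I : Fin k → Fin n =>
            (∀ r, y ℓ (I r) = σ r) ∧ (fun r => hist y (ℓ-1) (I r)) = ξ)).card : ℝ) * g ξ := by
    calc ∑ I ∈ Finset.univ.filter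
          (fun I : Fin k → Fin n => (fun r => hist y (ℓ-1) (I r)) = ξ),
          (if ∀ r, y ℓ (I r) = σ r then (1:ℝ) else 0) * g (fun r => hist y (ℓ-1) (I r))
        = ∑ I ∈ Finset.univ.filter
          (fun I : Fin k → Fin n => (fun r => hist y (ℓ-1) (I r)) = ξ),
          (if ∀ r, y ℓ (I r) = σ r then (1:ℝ) else 0) * g ξ :=
          Finset.sum_congr rfl fun I hI => by simp only [hmem I hI]
      _ = (∑ I ∈ Finset.univ.filter
          (fun I : Fin k → Fin n => (fun r => hist y (ℓ-1) (I r)) = ξ),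
          (if ∀ r, y ℓ (I r) = σ r then (1:ℝ) else 0)) * g ξ := by
          rw [Finset.sum_mul]
      _ = _ := by
          rw [Finset.sum_boole, Finset.filter_filter]
          have hfe : (Finset.univ.filter (fun I : Fin k → Fin n =>
              ((fun r => hist y (ℓ-1) (I r)) = ξ ∧ ∀ r, y ℓ (I r) = σ r)))
              = Finset.univ.filter (fun I : Fin k → Fin n =>
              (∀ r, y ℓ (I r) = σ r) ∧ (fun r => hist y (ℓ-1) (I r)) = ξ) := by
            ext I
            simp only [Finset.mem_filter]
            tauto
          rw [hfe]
  rw [lhs, rhs]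
  -- now compute the two cardinalities as products
  have hcard1 : (Finset.univ.filter
        (fun I : Fin k → Fin n => (fun r => hist y (ℓ-1) (I r)) = ξ))
      = Fintype.piFinset (fun r => Finset.univ.filter (fun i : Fin n => hist y (ℓ-1) i = ξ r)) := by
    ext I
    simp [Fintype.mem_piFinset, funext_iff]
  have hcard2 : (Finset.univ.filter
        (fun I : Fin k → Fin n =>
          (∀ r, y ℓ (I r) = σ r) ∧ (fun r => hist y (ℓ-1) (I r)) = ξ))
      = Fintype.piFinset (fun r => Finset.univ.filter
          (fun i : Fin n => y ℓ i = σ r ∧ hist y (ℓ-1) i = ξ r)) := by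
    ext I
    simp [Fintype.mem_piFinset, funext_iff, forall_and]
  rw [hcard1, hcard2, Fintype.card_piFinset, Fintype.card_piFinset]
  push_cast
  rw [← mul_assoc, ← Finset.prod_mul_distrib]
  congr 1
  exact Finset.prod_congr rfl fun r _ => count_mul_phi y ℓ (σ r) (ξ r)

lemma Biff {n k : ℕ} (y : ℕ → Fin n → Bool) (hy0 : ∀ i, y 0 i = true)
    (σ : Fin k → Bool) (j : ℕ) (I : Fin k → Fin n) :
    (∃ ℓ' ≤ j, ∀ r, y ℓ' (I r) = σ r)
      ↔ ((∀ r, σ r = true) ∨ ∃ t : Fin j, ∀ r, hist y j (I r) t = σ r) := by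
  constructor
  · rintro ⟨ℓ', hle, h⟩
    match ℓ', hle with
    | 0, _ => exact Or.inl fun r => by rw [← h r, hy0]
    | (t+1), hle =>
      exact Or.inr ⟨⟨t, by omega⟩, fun r => by simpa [hist] using h r⟩
  · rintro (h | ⟨t, h⟩)
    · exact ⟨0, Nat.zero_le _, fun r => (hy0 _).trans (h r).symm⟩
    · exact ⟨(t : ℕ) + 1, by have := t.isLt; omega, fun r => by simpa [hist] using h r⟩

theorem statement13 (k n : ℕ) (hk : 2 ≤ k) (hn : 1 ≤ n)
    (y : ℕ → Fin n → Bool) (hy0 : ∀ i, y 0 i = true) (σ : Fin k → Bool) :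
    (1 - 1 / Real.log k) * ∑ ℓ ∈ Finset.Icc 1 k, qfun y ℓ σ ≤ pP k y k σ := by
  classical
  have hk1 : (1:ℝ) < (k:ℝ) := by exact_mod_cast (by omega : 1 < k)
  have hL : 0 < Real.log k := Real.log_pos hk1
  set L := Real.log k with hLdef
  set c : ℝ := 1 / ((k:ℝ) * L) with hcdef
  have hc : 0 < c := by positivity
  set S : ℕ → ℝ := fun ℓ => ∑ I : Fin k → Fin n,
      if ∃ ℓ' ≤ ℓ, ∀ r, y ℓ' (I r) = σ r then (1:ℝ) else 0 with hSdef
  have hSnn : ∀ ℓ, 0 ≤ S ℓ := by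
    intro ℓ
    apply Finset.sum_nonneg
    intro I _
    split <;> norm_num
  have hSmono : ∀ a b, a ≤ b → S a ≤ S b := by
    intro a b hab
    apply Finset.sum_le_sum
    intro I _
    split_ifs with h1 h2
    · exact le_refl _
    · exact absurd (h1.imp fun ℓ' h => ⟨h.1.trans hab, h.2⟩) h2
    · norm_num
    · exact le_refl _
  -- nonnegativity and bounds on Qfun
  have hφnn : ∀ (ℓ : ℕ) (I : Fin k → Fin n), (0:ℝ) ≤ ∏ r, phi y ℓ (σ r) (hist y (ℓ-1) (I r)) := by
    intro ℓ I
    apply Finset.prod_nonneg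
    intro r _
    unfold phi
    positivity
  have hQnn : ∀ (ℓ : ℕ) (I : Fin k → Fin n), 0 ≤ Qfun y ℓ σ I := by
    intro ℓ I
    unfold Qfun
    split
    · exact hφnn ℓ I
    · exact le_refl _
  have hQφ : ∀ (ℓ : ℕ) (I : Fin k → Fin n), Qfun y ℓ σ I ≤ ∏ r, phi y ℓ (σ r) (hist y (ℓ-1) (I r)) := by
    intro ℓ I
    unfold Qfun
    split
    · exact le_refl _
    · exact hφnn ℓ I
  have hQc : ∀ (ℓ : ℕ) (I : Fin k → Fin n), Qfun y ℓ σ I ≤ c := by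
    intro ℓ I
    unfold Qfun
    split
    · assumption
    · exact hc.le
  -- key step inequality
  have hstep : ∀ ℓ, 1 ≤ ℓ →
      ∑ I : Fin k → Fin n, Qfun y ℓ σ I ≤ (S ℓ - S (ℓ-1)) + c * S (ℓ-1) := by
    intro ℓ hℓ
    have hkey : ∑ I : Fin k → Fin n,
          (∏ r, phi y ℓ (σ r) (hist y (ℓ-1) (I r)))
            * (if ∃ ℓ' ≤ ℓ-1, ∀ r, y ℓ' (I r) = σ r then (0:ℝ) else 1)
        = ∑ I : Fin k → Fin n,
          (if ∀ r, y ℓ (I r) = σ r then (1:ℝ) else 0)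
            * (if ∃ ℓ' ≤ ℓ-1, ∀ r, y ℓ' (I r) = σ r then (0:ℝ) else 1) := by
      have h := keyEq y σ ℓ (fun ξ =>
        if (∀ r, σ r = true) ∨ ∃ t : Fin (ℓ-1), ∀ r, ξ r t = σ r then (0:ℝ) else 1)
      simp only [← Biff y hy0 σ (ℓ-1)] at h
      exact h
    calc ∑ I : Fin k → Fin n, Qfun y ℓ σ I
        = ∑ I : Fin k → Fin n,
            ((if ∃ ℓ' ≤ ℓ-1, ∀ r, y ℓ' (I r) = σ r then Qfun y ℓ σ I else 0)
              + (if ∃ ℓ' ≤ ℓ-1, ∀ r, y ℓ' (I r) = σ r then 0 else Qfun y ℓ σ I)) := by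
          refine Finset.sum_congr rfl fun I _ => ?_
          split <;> ring
      _ = (∑ I : Fin k → Fin n,
            (if ∃ ℓ' ≤ ℓ-1, ∀ r, y ℓ' (I r) = σ r then Qfun y ℓ σ I else 0))
          + ∑ I : Fin k → Fin n,
            (if ∃ ℓ' ≤ ℓ-1, ∀ r, y ℓ' (I r) = σ r then 0 else Qfun y ℓ σ I) :=
          Finset.sum_add_distrib
      _ ≤ c * S (ℓ-1) + (S ℓ - S (ℓ-1)) := by
          gcongr ?_ + ?_
          · rw [hSdef]
            rw [Finset.mul_sum]
            apply Finset.sum_le_sum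
            intro I _
            split_ifs with h
            · simpa using hQc ℓ I
            · norm_num
          · calc ∑ I : Fin k → Fin n,
                  (if ∃ ℓ' ≤ ℓ-1, ∀ r, y ℓ' (I r) = σ r then 0 else Qfun y ℓ σ I)
                ≤ ∑ I : Fin k → Fin n,
                  (if ∃ ℓ' ≤ ℓ-1, ∀ r, y ℓ' (I r) = σ r then 0
                    else ∏ r, phi y ℓ (σ r) (hist y (ℓ-1) (I r))) := by
                  apply Finset.sum_le_sum
                  intro I _
                  split_ifs
                  · exact le_refl _
                  · exact hQφ ℓ I
              _ = ∑ I : Fin k → Fin n,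
                  (∏ r, phi y ℓ (σ r) (hist y (ℓ-1) (I r)))
                    * (if ∃ ℓ' ≤ ℓ-1, ∀ r, y ℓ' (I r) = σ r then (0:ℝ) else 1) := by
                  refine Finset.sum_congr rfl fun I _ => ?_
                  split <;> ring
              _ = ∑ I : Fin k → Fin n,
                  (if ∀ r, y ℓ (I r) = σ r then (1:ℝ) else 0)
                    * (if ∃ ℓ' ≤ ℓ-1, ∀ r, y ℓ' (I r) = σ r then (0:ℝ) else 1) := hkey
              _ ≤ S ℓ - S (ℓ-1) := by
                  rw [hSdef]
                  rw [← Finset.sum_sub_distrib]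
                  apply Finset.sum_le_sum
                  intro I _
                  by_cases hB : ∃ ℓ' ≤ ℓ-1, ∀ r, y ℓ' (I r) = σ r
                  · have hA : ∃ ℓ' ≤ ℓ, ∀ r, y ℓ' (I r) = σ r :=
                      hB.imp fun ℓ' h => ⟨by omega, h.2⟩
                    simp [hB, hA]
                  · by_cases hy : ∀ r, y ℓ (I r) = σ r
                    · have hA : ∃ ℓ' ≤ ℓ, ∀ r, y ℓ' (I r) = σ r := ⟨ℓ, le_refl ℓ, hy⟩
                      simp [hB, hA, hy]
                    · simp only [hB, hy, if_false, if_true, mul_one, mul_zero]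
                      split <;> norm_num
      _ = (S ℓ - S (ℓ-1)) + c * S (ℓ-1) := by ring
  -- sum over ℓ
  have htel : ∑ ℓ ∈ Finset.Icc 1 k, (S ℓ - S (ℓ-1)) = S k - S 0 := by
    have gen : ∀ m : ℕ, ∑ ℓ ∈ Finset.Icc 1 m, (S ℓ - S (ℓ-1)) = S m - S 0 := by
      intro m
      induction m with
      | zero => simp
      | succ p ih =>
        rw [Finset.sum_Icc_succ_top (by omega : 1 ≤ p + 1), ih]
        simp only [Nat.add_sub_cancel]
        ring
    exact gen k
  have hsum2 : ∑ ℓ ∈ Finset.Icc 1 k, c * S (ℓ-1) ≤ (k:ℝ) * (c * S k) := by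
    calc ∑ ℓ ∈ Finset.Icc 1 k, c * S (ℓ-1)
        ≤ ∑ ℓ ∈ Finset.Icc 1 k, c * S k := by
          apply Finset.sum_le_sum
          intro ℓ hℓ
          have hℓk : ℓ - 1 ≤ k := by
            have := (Finset.mem_Icc.mp hℓ).2; omega
          exact mul_le_mul_of_nonneg_left (hSmono _ _ hℓk) hc.le
      _ = (k:ℝ) * (c * S k) := by
          rw [Finset.sum_const, Nat.card_Icc, nsmul_eq_mul]
          norm_num
  have hT : ∑ ℓ ∈ Finset.Icc 1 k, ∑ I : Fin k → Fin n, Qfun y ℓ σ I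
      ≤ S k + (1/L) * S k := by
    have h1 : ∑ ℓ ∈ Finset.Icc 1 k, ∑ I : Fin k → Fin n, Qfun y ℓ σ I
        ≤ ∑ ℓ ∈ Finset.Icc 1 k, ((S ℓ - S (ℓ-1)) + c * S (ℓ-1)) := by
      apply Finset.sum_le_sum
      intro ℓ hℓ
      exact hstep ℓ (Finset.mem_Icc.mp hℓ).1
    rw [Finset.sum_add_distrib, htel] at h1
    have hck : (k:ℝ) * (c * S k) = (1/L) * S k := by
      rw [hcdef]
      have hk0 : (k:ℝ) ≠ 0 := by positivity
      field_simp
    have := hsum2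
    rw [hck] at this
    have h0 := hSnn 0
    linarith
  -- put things together
  have hN : 0 < ((Fintype.card (Fin k → Fin n) : ℕ) : ℝ) := by
    have : 0 < Fintype.card (Fin k → Fin n) :=
      Fintype.card_pos_iff.mpr ⟨fun _ => ⟨0, by omega⟩⟩
    exact_mod_cast this
  have hq : ∑ ℓ ∈ Finset.Icc 1 k, qfun y ℓ σ
      = (∑ ℓ ∈ Finset.Icc 1 k, ∑ I : Fin k → Fin n, Qfun y ℓ σ I)
        / ((Fintype.card (Fin k → Fin n) : ℕ) : ℝ) := by
    rw [Finset.sum_div]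
    rfl
  have hp : pP k y k σ = S k / ((Fintype.card (Fin k → Fin n) : ℕ) : ℝ) := rfl
  rw [hq, hp]
  set T := ∑ ℓ ∈ Finset.Icc 1 k, ∑ I : Fin k → Fin n, Qfun y ℓ σ I with hTdef
  have hTnn : 0 ≤ T := by
    apply Finset.sum_nonneg
    intro ℓ _
    exact Finset.sum_nonneg fun I _ => hQnn ℓ I
  rw [show (1 - 1/L) * (T / ((Fintype.card (Fin k → Fin n) : ℕ) : ℝ))
      = ((1 - 1/L) * T) / ((Fintype.card (Fin k → Fin n) : ℕ) : ℝ) from mul_div_assoc _ _ _ |>.symm]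
  have hfinal : (1 - 1/L) * T ≤ S k := by
    have hSk := hSnn k
    have hu : 0 < 1/L := by positivity
    rcases le_or_gt (1/L) 1 with h | h
    · nlinarith [mul_nonneg (sub_nonneg.2 h) (sub_nonneg.2 hT),
        mul_nonneg (mul_self_nonneg (1/L)) hSk]
    · nlinarith [mul_nonneg (sub_nonneg.2 h.le) hTnn]
  gcongr
end

section
/- Fix κ > κ* and let β_−, β_+ be as defined from κ. For every ε > 0 there exists k* such that for every integer k ≥ k*, every n ≥ 1, every tuple of assignments y^0,…,y^k ∈ {T,F}^n with y^0 the all-T assignment, and every 1 ≤ ℓ ≤ k: if H(π(y^ℓ | y^0,…,y^{ℓ−1})) = β·log k / k for some β ∈ [β_−, β_+], then Σ_{σ∈{T,F}^k} q_ℓ(σ) ≥ 1 − β·e^{−(β−1)} − ε. -/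
open MeasureTheory Finset Filter ProbabilityTheory

universe u

/-! ### auxiliary lemmas for statement14 -/

section Statement14Aux

open Finset

lemma aux_exp1 (x : ℝ) (hx : 0 ≤ x) : x * (1 - x) ≤ 1 - Real.exp (-x) := by
  have h1 : x + 1 ≤ Real.exp x := Real.add_one_le_exp x
  have h2 : 1 - x ≤ Real.exp (-x) := by
    have := Real.add_one_le_exp (-x); linarith
  have hexp : 0 < Real.exp (-x) := Real.exp_pos _
  have h3 : (x + 1) * Real.exp (-x) ≤ 1 := by
    have := mul_le_mul_of_nonneg_right h1 hexp.le
    rw [← Real.exp_add] at this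
    simpa using this
  nlinarith [mul_le_mul_of_nonneg_left h2 hx]

lemma aux_chord (x Y : ℝ) (h0 : 0 ≤ x) (hxY : x ≤ Y) (hY : 0 < Y) :
    x * (1 - Real.exp (-Y)) ≤ Y * (1 - Real.exp (-x)) := by
  have ht0 : 0 ≤ x / Y := div_nonneg h0 hY.le
  have ht1 : x / Y ≤ 1 := (div_le_one hY).2 hxY
  have key := convexOn_exp.2 (Set.mem_univ (-Y)) (Set.mem_univ 0)
      ht0 (sub_nonneg.2 ht1) (by ring)
  simp only [smul_eq_mul, mul_zero, add_zero, Real.exp_zero, mul_one] at key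
  have hxx : x / Y * -Y = -x := by field_simp
  rw [hxx] at key
  have h2 : Y * Real.exp (-x) ≤ x * Real.exp (-Y) + (Y - x) := by
    have := mul_le_mul_of_nonneg_left key hY.le
    have hYne : (Y:ℝ) ≠ 0 := hY.ne'
    field_simp at this
    nlinarith
  nlinarith

lemma aux_vev (v V : ℝ) (h1 : 1 ≤ V) (h : V ≤ v) :
    v * Real.exp (-v) ≤ V * Real.exp (-V) := by
  have hV : 0 < V := by linarith
  have h2 : v / V ≤ Real.exp (v - V) := by
    have := Real.add_one_le_exp (v - V)
    rw [div_le_iff₀ hV]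
    nlinarith [Real.exp_pos (v-V)]
  have he : Real.exp (-v) * Real.exp (v - V) = Real.exp (-V) := by
    rw [← Real.exp_add]; ring_nf
  calc v * Real.exp (-v) = (v / V) * Real.exp (-v) * V := by field_simp
    _ ≤ Real.exp (v - V) * Real.exp (-v) * V := by
        have := Real.exp_pos (-v)
        apply mul_le_mul_of_nonneg_right _ hV.le
        exact mul_le_mul_of_nonneg_right h2 this.le
    _ = V * Real.exp (-V) := by rw [mul_comm (Real.exp (v-V)) _, he, mul_comm]

lemma aux_sq_le (a x : ℝ) (hx : 0 ≤ x) : (1-a)*(1+a)*x ≤ x := by nlinarith [sq_nonneg a, mul_nonneg (mul_self_nonneg a) hx]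

set_option maxHeartbeats 1000000 in
lemma aux_point_ord (L τ e4 m M : ℝ)
    (hL1 : 1 ≤ L) (hτ : 0 < τ) (he4 : 0 < e4) (he41 : e4 ≤ 1/3)
    (hK2 : τ * Real.log 2 / L ≤ e4)
    (hK3 : (1+e4) * Real.exp (-(e4*L)) ≤ e4)
    (hm : 0 ≤ m) (hmM : m ≤ M) (hsum : m + M = 1) :
    m ^ (1 + τ/L) + M ^ (1 + τ/L) ≤
      1 - ((1-e4) * (1 - Real.exp (-τ)) / L) * (Real.negMulLog m + Real.negMulLog M)
        + e4 * Real.exp (-L) := by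
  have hL0 : (0:ℝ) < L := by linarith
  set θ := τ / L with hθdef
  set c := (1-e4) * (1 - Real.exp (-τ)) / L with hcdef
  have hθ : 0 < θ := div_pos hτ hL0
  have hEτ0 : 0 ≤ 1 - Real.exp (-τ) := by
    have : Real.exp (-τ) ≤ 1 := Real.exp_le_one_iff.2 (by linarith)
    linarith
  have hEτ1 : 1 - Real.exp (-τ) ≤ τ := by
    have := Real.add_one_le_exp (-τ); linarith
  have hc0 : 0 ≤ c := by
    apply div_nonneg _ hL0.le
    apply mul_nonneg (by linarith) hEτ0
  have hslack : 0 ≤ e4 * Real.exp (-L) := by positivity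
  rcases eq_or_lt_of_le hm with h0 | hm0
  · -- m = 0
    have hM1 : M = 1 := by linarith
    rw [← h0, hM1]
    rw [Real.zero_rpow (by positivity), Real.one_rpow, Real.negMulLog_zero,
      Real.negMulLog_one]
    simp only [add_zero, mul_zero, sub_zero, zero_add]
    linarith
  · -- m > 0
    have hM0 : (0:ℝ) < M := lt_of_lt_of_le hm0 hmM
    have hMhalf : (1:ℝ)/2 ≤ M := by linarith
    have hM1 : M ≤ 1 := by linarith
    have hmhalf : m ≤ 1/2 := by linarith
    set u := -Real.log M with hudef
    set v := -Real.log m with hvdef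
    have hlM : Real.log M = -u := by rw [hudef, neg_neg]
    have hlm : Real.log m = -v := by rw [hvdef, neg_neg]
    have hu0 : 0 ≤ u := by
      rw [hudef]
      simp only [neg_nonneg]
      exact Real.log_nonpos hM0.le hM1
    have hu2 : u ≤ Real.log 2 := by
      have h1 : Real.log M⁻¹ ≤ Real.log 2 := by
        apply Real.log_le_log (by positivity)
        rw [inv_le_comm₀ hM0 (by norm_num)]
        linarith
      rwa [Real.log_inv] at h1
    have hv2 : Real.log 2 ≤ v := by
      have h1 : Real.log 2 ≤ Real.log m⁻¹ := by
        apply Real.log_le_log (by norm_num)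
        rw [le_inv_comm₀ (by norm_num) hm0]
        linarith
      rwa [Real.log_inv] at h1
    have hv0 : 0 < v := lt_of_lt_of_le (Real.log_pos one_lt_two) hv2
    have hmexp : Real.exp (-v) = m := by rw [← hlm, Real.exp_log hm0]
    have hMexp : Real.exp (-u) = M := by rw [← hlM, Real.exp_log hM0]
    have hrm : m ^ (1+θ) = m * Real.exp (-(θ*v)) := by
      rw [Real.rpow_def_of_pos hm0, hlm,
        show -v * (1+θ) = -v + -(θ*v) by ring, Real.exp_add, hmexp]
    have hrM : M ^ (1+θ) = M * Real.exp (-(θ*u)) := by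
      rw [Real.rpow_def_of_pos hM0, hlM,
        show -u * (1+θ) = -u + -(θ*u) by ring, Real.exp_add, hMexp]
    have hnm : Real.negMulLog m = m * v := by
      rw [Real.negMulLog, hlm]; ring
    have hnM : Real.negMulLog M = M * u := by
      rw [Real.negMulLog, hlM]; ring
    have hcθ : c ≤ θ * (1 - e4) := by
      rw [hcdef, hθdef, div_mul_eq_mul_div, div_le_div_iff_of_pos_right hL0]
      nlinarith
    -- M part
    have hMpart : M * Real.exp (-(θ*u)) ≤ M - c * (M*u) := by
      have hθu : θ * u ≤ e4 := by
        calc θ * u ≤ θ * Real.log 2 := by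
              apply mul_le_mul_of_nonneg_left hu2 hθ.le
          _ = τ * Real.log 2 / L := by rw [hθdef]; ring
          _ ≤ e4 := hK2
      have hcu : c * u ≤ 1 - Real.exp (-(θ*u)) := by
        have h1 : c * u ≤ (θ*u) * (1 - θ*u) := by
          have h2 : c * u ≤ θ * (1-e4) * u := mul_le_mul_of_nonneg_right hcθ hu0
          nlinarith [mul_nonneg hθ.le hu0]
        exact h1.trans (aux_exp1 (θ*u) (mul_nonneg hθ.le hu0))
      have h3 : M * (c*u) ≤ M * (1 - Real.exp (-(θ*u))) :=
        mul_le_mul_of_nonneg_left hcu hM0.le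
      have h4 : M * (1 - Real.exp (-(θ*u))) = M - M * Real.exp (-(θ*u)) := by ring
      have h5 : M * (c*u) = c * (M*u) := by ring
      linarith
    -- m part
    have hmpart : m * Real.exp (-(θ*v)) ≤ m - c * (m*v) + e4 * Real.exp (-L) := by
      by_cases hcase : v ≤ (1+e4)*L
      · have hY : (0:ℝ) < (1+e4)*τ := by positivity
        have hxY : θ*v ≤ (1+e4)*τ := by
          rw [hθdef, div_mul_eq_mul_div, div_le_iff₀ hL0]
          have hh := mul_le_mul_of_nonneg_left hcase hτ.le
          have hh2 : τ*((1+e4)*L) = (1+e4)*τ*L := by ring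
          linarith
        have hchord := aux_chord (θ*v) ((1+e4)*τ)
          (mul_nonneg hθ.le hv0.le) hxY hY
        have hA1 : 1 - Real.exp (-τ) ≤ 1 - Real.exp (-((1+e4)*τ)) := by
          have hmm : 0 ≤ e4 * τ := by positivity
          have := Real.exp_le_exp.2 (show -((1+e4)*τ) ≤ -τ by nlinarith [hmm])
          linarith
        have hfact : c * v * ((1+e4)*τ) ≤ (θ*v) * (1 - Real.exp (-((1+e4)*τ))) := by
          have h1 : c * v * ((1+e4)*τ) = (θ*v) * ((1-e4)*(1+e4)*(1 - Real.exp (-τ))) := by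
            rw [hcdef, hθdef]; field_simp
          rw [h1]
          apply mul_le_mul_of_nonneg_left _ (mul_nonneg hθ.le hv0.le)
          exact (aux_sq_le e4 _ hEτ0).trans hA1
        have hcv : c * v ≤ 1 - Real.exp (-(θ*v)) := by
          have h6 := hfact.trans hchord
          have h7 : c * v * ((1+e4)*τ) ≤ (1 - Real.exp (-(θ*v))) * ((1+e4)*τ) := by
            linarith [h6]
          exact le_of_mul_le_mul_right h7 hY
        have h3 : m * (c*v) ≤ m * (1 - Real.exp (-(θ*v))) :=
          mul_le_mul_of_nonneg_left hcv hm0.le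
        have h4 : m * (1 - Real.exp (-(θ*v))) = m - m * Real.exp (-(θ*v)) := by ring
        have h5 : m * (c*v) = c * (m*v) := by ring
        linarith
      · push_neg at hcase
        have h1 : m * Real.exp (-(θ*v)) ≤ m := by
          have hh : Real.exp (-(θ*v)) ≤ 1 :=
            Real.exp_le_one_iff.2 (neg_nonpos.2 (mul_nonneg hθ.le hv0.le))
          calc m * Real.exp (-(θ*v)) ≤ m * 1 := mul_le_mul_of_nonneg_left hh hm0.le
            _ = m := mul_one m
        have hV1 : (1:ℝ) ≤ (1+e4)*L := by
          have hh : 1*L ≤ (1+e4)*L := mul_le_mul_of_nonneg_right (by linarith) (by linarith)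
          rw [one_mul] at hh; linarith
        have hvev : v * Real.exp (-v) ≤ ((1+e4)*L) * Real.exp (-((1+e4)*L)) :=
          aux_vev v ((1+e4)*L) hV1 hcase.le
        have hsplit : Real.exp (-((1+e4)*L)) = Real.exp (-(e4*L)) * Real.exp (-L) := by
          rw [← Real.exp_add]; ring_nf
        have hc1 : c ≤ 1/L := by
          rw [hcdef, div_le_div_iff_of_pos_right hL0]
          nlinarith [Real.exp_pos (-τ), hEτ0]
        have h2 : c * (m*v) ≤ e4 * Real.exp (-L) := by
          have hmv : m * v = v * Real.exp (-v) := by rw [hmexp]; ring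
          calc c * (m*v) ≤ (1/L) * (m*v) := by
                apply mul_le_mul_of_nonneg_right hc1
                exact mul_nonneg hm0.le hv0.le
            _ = (v * Real.exp (-v)) / L := by rw [hmv]; ring
            _ ≤ (((1+e4)*L) * Real.exp (-((1+e4)*L))) / L := by
                exact (div_le_div_iff_of_pos_right hL0).2 hvev
            _ = (1+e4) * Real.exp (-(e4*L)) * Real.exp (-L) := by
                rw [hsplit]; field_simp
            _ ≤ e4 * Real.exp (-L) := by
                apply mul_le_mul_of_nonneg_right hK3 (Real.exp_pos _).le
        linarith
    rw [hrm, hrM, hnm, hnM]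
    have := add_le_add hmpart hMpart
    linarith


lemma aux_pointwise (L τ e4 p q : ℝ)
    (hL1 : 1 ≤ L) (hτ : 0 < τ) (he4 : 0 < e4) (he41 : e4 ≤ 1/3)
    (hK2 : τ * Real.log 2 / L ≤ e4)
    (hK3 : (1+e4) * Real.exp (-(e4*L)) ≤ e4)
    (hp : 0 ≤ p) (hq : 0 ≤ q) (hpq : p + q = 1) :
    p ^ (1 + τ/L) + q ^ (1 + τ/L) ≤
      1 - ((1-e4) * (1 - Real.exp (-τ)) / L) * (Real.negMulLog p + Real.negMulLog q)
        + e4 * Real.exp (-L) := by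
  rcases le_total p q with h | h
  · exact aux_point_ord L τ e4 p q hL1 hτ he4 he41 hK2 hK3 hp h hpq
  · have h1 := aux_point_ord L τ e4 q p hL1 hτ he4 he41 hK2 hK3 hq h (by linarith)
    have h2 : ((1-e4) * (1 - Real.exp (-τ)) / L) * (Real.negMulLog q + Real.negMulLog p)
        = ((1-e4) * (1 - Real.exp (-τ)) / L) * (Real.negMulLog p + Real.negMulLog q) := by
      ring
    linarith

lemma natCard_eq_filter {n : ℕ} (p : Fin n → Prop) [DecidablePred p] :
    (Nat.card {i // p i} : ℕ) = (Finset.univ.filter p).card := by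
  simp [Nat.card_eq_fintype_card, Fintype.card_subtype]

lemma aux_card_split {α : Type*} [Fintype α] (f : α → Bool) (R : α → Prop) :
    Nat.card {j // f j = true ∧ R j} + Nat.card {j // f j = false ∧ R j}
      = Nat.card {j // R j} := by
  classical
  rw [← Nat.card_sum]
  apply Nat.card_congr
  refine ⟨fun x => Sum.elim (fun a => ⟨a.1, a.2.2⟩) (fun a => ⟨a.1, a.2.2⟩) x,
    fun a => if hb : f a.1 = true then Sum.inl ⟨a.1, hb, a.2⟩
      else Sum.inr ⟨a.1, by simp only [Bool.not_eq_true] at hb; exact ⟨hb, a.2⟩⟩, ?_, ?_⟩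
  · rintro (⟨a, h1, h2⟩ | ⟨a, h1, h2⟩)
    · simp [h1]
    · simp [h1]
  · rintro ⟨a, ha⟩
    by_cases hb : f a = true <;> simp [hb]

lemma aux_phi_sum {n : ℕ} (y : ℕ → Fin n → Bool) (l : ℕ) (i : Fin n) :
    phi y (l+1) true (hist y l i) + phi y (l+1) false (hist y l i) = 1 := by
  classical
  unfold phi
  show (Nat.card {j // y (l+1) j = true ∧ hist y l j = hist y l i} : ℝ)
      / (Nat.card {j // hist y l j = hist y l i} : ℝ)
    + (Nat.card {j // y (l+1) j = false ∧ hist y l j = hist y l i} : ℝ)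
      / (Nat.card {j // hist y l j = hist y l i} : ℝ) = 1
  have hne : Nonempty {j // hist y l j = hist y l i} := ⟨⟨i, rfl⟩⟩
  have hd : 0 < Nat.card {j // hist y l j = hist y l i} := Nat.card_pos
  have hsum : Nat.card {j // y (l+1) j = true ∧ hist y l j = hist y l i}
      + Nat.card {j // y (l+1) j = false ∧ hist y l j = hist y l i}
      = Nat.card {j // hist y l j = hist y l i} :=
    aux_card_split (fun j => y (l+1) j) (fun j => hist y l j = hist y l i)
  rw [← add_div, ← Nat.cast_add, hsum]
  rw [div_self]
  exact Nat.cast_ne_zero.2 hd.ne'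

lemma aux_sum_prod {n k : ℕ} (g : Fin n × Bool → ℝ) :
    ∑ σ : Fin k → Bool, ∑ I : Fin k → Fin n, ∏ r, g (I r, σ r) = (∑ z, g z) ^ k := by
  classical
  have h1 : (∑ z, g z)^k = ∑ J : Fin k → Fin n × Bool, ∏ r, g (J r) := by
    have h0 : (∑ z, g z)^k = ∏ _r : Fin k, (∑ z ∈ Finset.univ, g z) := by
      rw [Finset.prod_const]
      simp
    rw [h0, Finset.prod_univ_sum, Fintype.piFinset_univ]
  rw [h1, ← Equiv.sum_comp (Equiv.arrowProdEquivProdArrow (Fin k) (fun _ => Fin n) (fun _ => Bool)).symm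
    (fun J => ∏ r, g (J r)), Fintype.sum_prod_type]
  rw [Finset.sum_comm]
  rfl


lemma aux_condH {n : ℕ} (y : ℕ → Fin n → Bool) (h0 : ∀ i, y 0 i = true) (l : ℕ) :
    condH y (l+1) = (∑ i : Fin n, Hb (phi y (l+1) true (hist y l i))) / n := by
  classical
  have hclass : ∀ (ξ : Fin l → Bool) (i : Fin n),
      (∀ t : Fin (l+1), y ↑t i = (Fin.cons true ξ : Fin (l+1) → Bool) t) ↔ hist y l i = ξ := by
    intro ξ i
    constructor
    · intro h
      funext s
      have hs := h s.succ
      rw [Fin.cons_succ] at hs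
      show y (↑s + 1) i = ξ s
      simpa [Fin.val_succ] using hs
    · intro h t
      induction t using Fin.cases with
      | zero => rw [Fin.cons_zero]; simpa using h0 i
      | succ s =>
        rw [Fin.cons_succ]
        have hh := congrFun h s
        simp only [hist] at hh
        simpa [Fin.val_succ] using hh
  have hpatT : ∀ ξ : Fin l → Bool,
      patCount (fun t : Fin (l+1) => y ↑t) (Fin.cons true ξ)
        = Nat.card {i : Fin n // hist y l i = ξ} := by
    intro ξ
    exact Nat.card_congr (Equiv.subtypeEquivRight fun i => hclass ξ i)
  have hpatF : ∀ ξ : Fin l → Bool,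
      patCount (fun t : Fin (l+1) => y ↑t) (fun t => !((Fin.cons true ξ : Fin (l+1) → Bool) t)) = 0 := by
    intro ξ
    haveI : IsEmpty {i : Fin n // ∀ t : Fin (l+1), y ↑t i = !((Fin.cons true ξ : Fin (l+1) → Bool) t)} := by
      refine ⟨?_⟩
      rintro ⟨i, hi⟩
      have h1 := hi 0
      rw [Fin.cons_zero] at h1
      simp [h0 i] at h1
    exact Nat.card_of_isEmpty
  have hphiT : ∀ ξ : Fin l → Bool, phi y (l+1) true ξ =
      (Nat.card {i : Fin n // y (l+1) i = true ∧ hist y l i = ξ} : ℝ)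
        / (Nat.card {i : Fin n // hist y l i = ξ} : ℝ) := fun ξ => rfl
  have hlam : ∀ ξ : Fin l → Bool,
      lamFrac (y (l+1)) (fun t : Fin (l+1) => y ↑t) (Fin.cons true ξ)
        = phi y (l+1) true ξ := by
    intro ξ
    have hnum : Nat.card {i : Fin n //
        ((∀ t, (fun t : Fin (l+1) => y ↑t) t i = (Fin.cons true ξ : Fin (l+1) → Bool) t)
          ∨ (∀ t, (fun t : Fin (l+1) => y ↑t) t i = !((Fin.cons true ξ : Fin (l+1) → Bool) t)))
          ∧ y (l+1) i = true}
        = Nat.card {i : Fin n // y (l+1) i = true ∧ hist y l i = ξ} := by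
      apply Nat.card_congr
      apply Equiv.subtypeEquivRight
      intro i
      constructor
      · rintro ⟨h1 | h1, h2⟩
        · exact ⟨h2, (hclass ξ i).1 h1⟩
        · exfalso
          have h3 := h1 0
          rw [Fin.cons_zero] at h3
          simp [h0 i] at h3
      · rintro ⟨h2, h1⟩
        exact ⟨Or.inl ((hclass ξ i).2 h1), h2⟩
    unfold lamFrac
    rw [hnum, hpatT, hpatF, hphiT]
    norm_num
  have hprof : ∀ ξ : Fin l → Bool,
      profFrac (fun t : Fin (l+1) => y ↑t) (Fin.cons true ξ)
        = (Nat.card {i : Fin n // hist y l i = ξ} : ℝ) / n := by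
    intro ξ
    unfold profFrac
    rw [hpatT, hpatF]
    norm_num
  have hsym : ∀ σ : Fin (l+1) → Bool,
      profFrac (fun t : Fin (l+1) => y ↑t) (fun t => !(σ t))
          * Hb (lamFrac (y (l+1)) (fun t : Fin (l+1) => y ↑t) (fun t => !(σ t)))
        = profFrac (fun t : Fin (l+1) => y ↑t) σ
          * Hb (lamFrac (y (l+1)) (fun t : Fin (l+1) => y ↑t) σ) := by
    intro σ
    have h1 : profFrac (fun t : Fin (l+1) => y ↑t) (fun t => !(σ t))
        = profFrac (fun t : Fin (l+1) => y ↑t) σ := by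
      unfold profFrac
      simp only [Bool.not_not]
      ring
    have h2 : lamFrac (y (l+1)) (fun t : Fin (l+1) => y ↑t) (fun t => !(σ t))
        = lamFrac (y (l+1)) (fun t : Fin (l+1) => y ↑t) σ := by
      unfold lamFrac
      simp only [Bool.not_not]
      have hno : Nat.card {i : Fin n //
          ((∀ t, (fun t : Fin (l+1) => y ↑t) t i = !(σ t))
            ∨ (∀ t, (fun t : Fin (l+1) => y ↑t) t i = σ t)) ∧ y (l+1) i = true}
          = Nat.card {i : Fin n //
          ((∀ t, (fun t : Fin (l+1) => y ↑t) t i = σ t)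
            ∨ (∀ t, (fun t : Fin (l+1) => y ↑t) t i = !(σ t))) ∧ y (l+1) i = true} := by
        apply Nat.card_congr
        apply Equiv.subtypeEquivRight
        intro i
        tauto
      rw [hno, add_comm ((patCount (fun t : Fin (l+1) => y ↑t) (fun t => !(σ t)) : ℕ) : ℝ)
        ((patCount (fun t : Fin (l+1) => y ↑t) σ : ℕ) : ℝ)]
    rw [h1, h2]
  set f : (Fin (l+1) → Bool) → ℝ := fun σ =>
      profFrac (fun t : Fin (l+1) => y ↑t) σ
        * Hb (lamFrac (y (l+1)) (fun t : Fin (l+1) => y ↑t) σ) with hf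
  have e2 : ∑ σ : Fin (l+1) → Bool, f σ
      = (∑ ξ : Fin l → Bool, f (Fin.cons true ξ))
        + ∑ ξ : Fin l → Bool, f (Fin.cons false ξ) := by
    rw [← (Fin.consEquiv (fun _ : Fin (l+1) => Bool)).sum_comp f, Fintype.sum_prod_type,
      Fintype.sum_bool]
    rfl
  have e3 : ∑ ξ : Fin l → Bool, f (Fin.cons false ξ)
      = ∑ ξ : Fin l → Bool, f (Fin.cons true ξ) := by
    have hstep : ∀ ξ : Fin l → Bool,
        f (Fin.cons false ξ) = f (Fin.cons true (fun s => !(ξ s))) := by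
      intro ξ
      have hflip : (fun t => !((Fin.cons false ξ : Fin (l+1) → Bool) t))
          = (Fin.cons true (fun s => !(ξ s)) : Fin (l+1) → Bool) := by
        funext t
        induction t using Fin.cases with
        | zero => simp
        | succ s => simp [Fin.cons_succ]
      have := hsym (Fin.cons false ξ)
      rw [hflip] at this
      exact this.symm
    rw [Finset.sum_congr rfl (fun ξ _ => hstep ξ)]
    exact (Equiv.sum_comp
      (⟨fun ξ s => !(ξ s), fun ξ s => !(ξ s), fun ξ => by funext s; simp,
        fun ξ => by funext s; simp⟩ : (Fin l → Bool) ≃ (Fin l → Bool))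
      (fun ξ => f (Fin.cons true ξ)))
  have e4 : ∀ ξ : Fin l → Bool, f (Fin.cons true ξ)
      = (Nat.card {i : Fin n // hist y l i = ξ} : ℝ) / n * Hb (phi y (l+1) true ξ) := by
    intro ξ
    show profFrac (fun t : Fin (l+1) => y ↑t) (Fin.cons true ξ)
        * Hb (lamFrac (y (l+1)) (fun t : Fin (l+1) => y ↑t) (Fin.cons true ξ)) = _
    rw [hprof, hlam]
  have e5 : ∑ i : Fin n, Hb (phi y (l+1) true (hist y l i))
      = ∑ ξ : Fin l → Bool,
          (Nat.card {i : Fin n // hist y l i = ξ} : ℝ) * Hb (phi y (l+1) true ξ) := by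
    rw [← Finset.sum_fiberwise Finset.univ (fun i => hist y l i)
      (fun i => Hb (phi y (l+1) true (hist y l i)))]
    apply Finset.sum_congr rfl
    intro ξ _
    rw [Finset.sum_congr rfl (fun i hi => by rw [(Finset.mem_filter.1 hi).2]),
      Finset.sum_const, nsmul_eq_mul,
      show (Finset.univ.filter (fun i : Fin n => hist y l i = ξ)).card
        = Nat.card {i : Fin n // hist y l i = ξ} from (natCard_eq_filter _).symm]
  calc condH y (l+1) = (1/2) * ∑ σ : Fin (l+1) → Bool, f σ := rfl
    _ = (1/2) * ((∑ ξ : Fin l → Bool, f (Fin.cons true ξ))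
          + ∑ ξ : Fin l → Bool, f (Fin.cons false ξ)) := by rw [e2]
    _ = ∑ ξ : Fin l → Bool, f (Fin.cons true ξ) := by rw [e3]; ring
    _ = ∑ ξ : Fin l → Bool,
          (Nat.card {i : Fin n // hist y l i = ξ} : ℝ) / n * Hb (phi y (l+1) true ξ) :=
        Finset.sum_congr rfl fun ξ _ => e4 ξ
    _ = (∑ ξ : Fin l → Bool,
          (Nat.card {i : Fin n // hist y l i = ξ} : ℝ) * Hb (phi y (l+1) true ξ)) / n := by
        rw [Finset.sum_div]
        exact Finset.sum_congr rfl fun ξ _ => by ring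
    _ = (∑ i : Fin n, Hb (phi y (l+1) true (hist y l i))) / n := by rw [e5]

end Statement14Aux

set_option maxHeartbeats 2000000 in
theorem statement14 (κ βmin βmax βstar βm βp : ℝ) (hκ : kappaStar < κ)
    (hstar1 : 1 < βstar) (hstar2 : βstar ^ 2 * Real.exp (-(βstar - 1)) = 1)
    (hmin1 : 1 < βmin) (hmin2 : βmin < βstar) (hmin3 : iota βmin = κ)
    (hmax1 : βstar < βmax) (hmax2 : iota βmax = κ)
    (hβm : βm = (βmin + βstar) / 2) (hβp : βp = (βmax + βstar) / 2) (ε : ℝ) (hε : 0 < ε) :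
    ∃ kstar : ℕ, ∀ k : ℕ, kstar ≤ k →
      ∀ n : ℕ, 1 ≤ n →
        ∀ y : ℕ → Fin n → Bool, (∀ i, y 0 i = true) →
          ∀ ℓ : ℕ, 1 ≤ ℓ → ℓ ≤ k →
            ∀ β : ℝ, β ∈ Set.Icc βm βp →
              condH y ℓ = β * Real.log k / k →
              1 - β * Real.exp (-(β - 1)) - ε ≤ ∑ σ : Fin k → Bool, qfun y ℓ σ := by
  have hβm1 : 1 < βm := by rw [hβm]; linarith
  have hβp1 : 1 < βp := by rw [hβp]; linarith
  have hτ1pos : 0 < Real.log βp := Real.log_pos hβp1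
  have hε1 : 0 < Real.log (1+ε) := Real.log_pos (by linarith)
  set τ1 : ℝ := Real.log βp with hτ1def
  set e5 : ℝ := min 1 (Real.log (1+ε)) with he5def
  have he5pos : 0 < e5 := lt_min one_pos hε1
  have he51 : e5 ≤ 1 := min_le_left _ _
  have he5log : e5 ≤ Real.log (1+ε) := min_le_right _ _
  set e4 : ℝ := e5 / (βp + 2) with he4def
  have he4pos : 0 < e4 := div_pos he5pos (by linarith)
  have he4third : e4 ≤ 1/3 := by
    rw [he4def, div_le_iff₀ (by linarith : (0:ℝ) < βp + 2)]
    nlinarith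
  have hlogtend : Filter.Tendsto (fun k : ℕ => Real.log k) Filter.atTop Filter.atTop :=
    Real.tendsto_log_atTop.comp tendsto_natCast_atTop_atTop
  have hev : ∀ᶠ k : ℕ in Filter.atTop,
      1 ≤ Real.log k ∧ τ1 * Real.log 2 ≤ e4 * Real.log k ∧
      Real.log ((1+e4)/e4) ≤ e4 * Real.log k ∧ (2*τ1/e4)^2 ≤ Real.log k ∧ βp ≤ (k:ℝ) := by
    filter_upwards [hlogtend.eventually_ge_atTop 1,
      hlogtend.eventually_ge_atTop (τ1 * Real.log 2 / e4),
      hlogtend.eventually_ge_atTop (Real.log ((1+e4)/e4) / e4),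
      hlogtend.eventually_ge_atTop ((2*τ1/e4)^2),
      tendsto_natCast_atTop_atTop.eventually_ge_atTop βp] with k h1 h2 h3 h4 h5
    refine ⟨h1, ?_, ?_, h4, h5⟩
    · rw [div_le_iff₀ he4pos] at h2; linarith
    · rw [div_le_iff₀ he4pos] at h3; linarith
  obtain ⟨kstar, hkstar⟩ := Filter.eventually_atTop.1 hev
  refine ⟨kstar, fun k hk n hn y hy0 ℓ hℓ1 hℓk β hβ hcond => ?_⟩
  obtain ⟨hL1, hK2, hK3, hK4, hK5⟩ := hkstar k hk
  obtain ⟨l, rfl⟩ : ∃ l, ℓ = l + 1 := ⟨ℓ - 1, (Nat.succ_pred_eq_of_pos hℓ1).symm⟩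
  classical
  set L := Real.log (k:ℝ) with hLdef
  have hLpos : 0 < L := by linarith
  have hL0 : L ≠ 0 := ne_of_gt hLpos
  have hkpos : (0:ℝ) < k := by linarith
  have hk0 : (k:ℝ) ≠ 0 := ne_of_gt hkpos
  have hn0 : (0:ℝ) < n := by exact_mod_cast hn
  have hβ1 : 1 < β := lt_of_lt_of_le hβm1 hβ.1
  have hβpos : (0:ℝ) < β := by linarith
  set τ := Real.log β with hτdef
  have hτpos : 0 < τ := Real.log_pos hβ1
  have hττ1 : τ ≤ τ1 := by rw [hτdef, hτ1def]; exact Real.log_le_log hβpos hβ.2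
  have hτ1nn : 0 ≤ τ1 := le_of_lt hτ1pos
  have hK2' : τ * Real.log 2 / L ≤ e4 := by
    rw [div_le_iff₀ hLpos]
    have h6 : τ * Real.log 2 ≤ τ1 * Real.log 2 :=
      mul_le_mul_of_nonneg_right hττ1 (Real.log_nonneg one_le_two)
    linarith
  have hK3' : (1+e4) * Real.exp (-(e4*L)) ≤ e4 := by
    have h1 : Real.exp (-(e4*L)) ≤ Real.exp (-(Real.log ((1+e4)/e4))) := by
      apply Real.exp_le_exp.2; linarith
    have h2 : Real.exp (-(Real.log ((1+e4)/e4))) = e4/(1+e4) := by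
      rw [Real.exp_neg, Real.exp_log (by positivity), inv_div]
    calc (1+e4) * Real.exp (-(e4*L)) ≤ (1+e4) * (e4/(1+e4)) :=
          mul_le_mul_of_nonneg_left (h1.trans_eq h2) (by linarith)
      _ = e4 := by field_simp
  set F : Fin n × Bool → ℝ := fun z => phi y (l+1) z.2 (hist y l z.1) with hFdef
  have hFnn : ∀ z, 0 ≤ F z := by
    intro z
    show (0:ℝ) ≤ (Nat.card _ : ℝ) / (Nat.card _ : ℝ)
    positivity
  have hFsum : ∀ i : Fin n, F (i, true) + F (i, false) = 1 := fun i => aux_phi_sum y l i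
  have hHsum : ∑ i : Fin n, Hb (F (i, true)) = (n:ℝ) * (β * L / k) := by
    have hc2 := (aux_condH y hy0 l).symm.trans hcond
    rw [div_eq_iff (ne_of_gt hn0)] at hc2
    have hc3 : ∑ i : Fin n, Hb (F (i, true))
        = ∑ i : Fin n, Hb (phi y (l+1) true (hist y l i)) := rfl
    rw [hc3, hc2]; ring
  -- pointwise bound
  have hpoint : ∀ i : Fin n, F (i,true) ^ (1+τ/L) + F (i,false) ^ (1+τ/L)
      ≤ 1 - ((1-e4) * (1 - Real.exp (-τ)) / L) * Hb (F (i,true)) + e4 * Real.exp (-L) := by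
    intro i
    have h1 := aux_pointwise L τ e4 (F (i,true)) (F (i,false)) hL1 hτpos he4pos he4third
      hK2' hK3' (hFnn _) (hFnn _) (hFsum i)
    have h3 : F (i,false) = 1 - F (i,true) := by linarith [hFsum i]
    have h2 : Real.negMulLog (F (i,true)) + Real.negMulLog (F (i,false))
        = Hb (F (i,true)) := by
      rw [show Hb (F (i,true))
        = Real.negMulLog (F (i,true)) + Real.negMulLog (1 - F (i,true)) from rfl, h3]
    rwa [h2] at h1
  have hexpL : Real.exp (-L) = (k:ℝ)⁻¹ := by
    rw [hLdef, Real.exp_neg, Real.exp_log hkpos]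
  have hexpτ : Real.exp (-τ) = β⁻¹ := by
    rw [hτdef, Real.exp_neg, Real.exp_log hβpos]
  -- base bound
  have hbase : ∑ z : Fin n × Bool, F z ^ (1 + τ/L)
      ≤ (n:ℝ) * (1 - ((1-e4)*(β-1) - e4)/k) := by
    calc ∑ z : Fin n × Bool, F z ^ (1+τ/L)
        = ∑ i : Fin n, (F (i,true)^(1+τ/L) + F (i,false)^(1+τ/L)) := by
          rw [Fintype.sum_prod_type]
          exact Finset.sum_congr rfl fun i _ => by
            rw [Fintype.sum_bool (f := fun b => F (i,b)^(1+τ/L))]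
      _ ≤ ∑ i : Fin n, (1 - ((1-e4) * (1 - Real.exp (-τ)) / L) * Hb (F (i,true))
            + e4 * Real.exp (-L)) := Finset.sum_le_sum fun i _ => hpoint i
      _ = (n:ℝ) - ((1-e4) * (1 - Real.exp (-τ)) / L) * (∑ i : Fin n, Hb (F (i,true)))
            + (n:ℝ) * (e4 * Real.exp (-L)) := by
          rw [Finset.sum_add_distrib, Finset.sum_sub_distrib, ← Finset.mul_sum,
            Finset.sum_const, Finset.sum_const]
          simp [Finset.card_univ]
      _ = (n:ℝ) * (1 - ((1-e4)*(β-1) - e4)/k) := by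
          rw [hHsum, hexpL, hexpτ]
          field_simp
          ring
  -- per-term lower bound for Qfun
  have hδpos : (0:ℝ) < 1/((k:ℝ)*L) := by positivity
  have hlow : ∀ (σ : Fin k → Bool) (I : Fin k → Fin n),
      (∏ r, F (I r, σ r)) - (1/((k:ℝ)*L))^(-(τ/L)) * ∏ r, F (I r, σ r) ^ (1+τ/L)
        ≤ Qfun y (l+1) σ I := by
    intro σ I
    have hWnn : (0:ℝ) ≤ ∏ r, F (I r, σ r) := Finset.prod_nonneg fun r _ => hFnn _
    have hPnn : (0:ℝ) ≤ ∏ r, F (I r, σ r) ^ (1+τ/L) :=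
      Finset.prod_nonneg fun r _ => Real.rpow_nonneg (hFnn _) _
    have hdnn : (0:ℝ) ≤ (1/((k:ℝ)*L))^(-(τ/L)) := Real.rpow_nonneg hδpos.le _
    unfold Qfun
    split_ifs with h
    · exact sub_le_self _ (mul_nonneg hdnn hPnn)
    · push_neg at h
      have hδW : 1/((k:ℝ)*L) ≤ ∏ r, F (I r, σ r) := le_of_lt h
      have hWpos : (0:ℝ) < ∏ r, F (I r, σ r) := hδpos.trans h
      have hP : ∏ r, F (I r, σ r) ^ (1+τ/L) = (∏ r, F (I r, σ r)) ^ (1+τ/L) :=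
        Real.finset_prod_rpow Finset.univ _ (fun r _ => hFnn _) _
      have hkey : (∏ r, F (I r, σ r))
          ≤ (1/((k:ℝ)*L))^(-(τ/L)) * (∏ r, F (I r, σ r)) ^ (1+τ/L) := by
        have h1 : (∏ r, F (I r, σ r)) ^ (1+τ/L)
            = (∏ r, F (I r, σ r)) * (∏ r, F (I r, σ r))^(τ/L) := by
          rw [Real.rpow_add hWpos, Real.rpow_one]
        have h2 : (1/((k:ℝ)*L))^(-(τ/L)) = ((1/((k:ℝ)*L))^(τ/L))⁻¹ := by
          rw [Real.rpow_neg hδpos.le]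
        have h3 : (1/((k:ℝ)*L))^(τ/L) ≤ (∏ r, F (I r, σ r))^(τ/L) :=
          Real.rpow_le_rpow hδpos.le hδW (by positivity)
        have h4 : (0:ℝ) < (1/((k:ℝ)*L))^(τ/L) := Real.rpow_pos_of_pos hδpos _
        rw [h1, h2]
        calc (∏ r, F (I r, σ r)) = (∏ r, F (I r, σ r)) * 1 := (mul_one _).symm
          _ ≤ (∏ r, F (I r, σ r)) *
              ((∏ r, F (I r, σ r))^(τ/L) * ((1/((k:ℝ)*L))^(τ/L))⁻¹) := by
              apply mul_le_mul_of_nonneg_left _ hWpos.le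
              rw [← div_eq_mul_inv, le_div_iff₀ h4]
              simpa using h3
          _ = ((1/((k:ℝ)*L))^(τ/L))⁻¹ *
              ((∏ r, F (I r, σ r)) * (∏ r, F (I r, σ r))^(τ/L)) := by ring
      rw [← hP] at hkey
      linarith only [hkey]
  -- sum identities
  have hsum1 : ∑ σ : Fin k → Bool, ∑ I : Fin k → Fin n, (∏ r, F (I r, σ r))
      = ((n:ℝ))^k := by
    rw [aux_sum_prod F]
    have h1 : ∑ z : Fin n × Bool, F z = (n:ℝ) := by
      rw [Fintype.sum_prod_type]
      have h2 : ∀ i : Fin n, (∑ b : Bool, F (i, b)) = 1 := by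
        intro i
        rw [Fintype.sum_bool (f := fun b => F (i,b))]
        exact hFsum i
      rw [Finset.sum_congr rfl (fun i _ => h2 i)]
      simp [Finset.card_univ]
    rw [h1]
  have hsum2 : ∑ σ : Fin k → Bool, ∑ I : Fin k → Fin n, (∏ r, F (I r, σ r) ^ (1+τ/L))
      = (∑ z : Fin n × Bool, F z ^ (1+τ/L))^k := aux_sum_prod (fun z => F z ^ (1+τ/L))
  have hcard : ((Fintype.card (Fin k → Fin n)) : ℝ) = (n:ℝ)^k := by
    rw [Fintype.card_fun]
    push_cast
    simp
  have hqsum : ∑ σ : Fin k → Bool, qfun y (l+1) σ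
      = (∑ σ : Fin k → Bool, ∑ I : Fin k → Fin n, Qfun y (l+1) σ I) / (n:ℝ)^k := by
    unfold qfun
    rw [← Finset.sum_div, hcard]
  have hTlow : (n:ℝ)^k
      - (1/((k:ℝ)*L))^(-(τ/L)) * (∑ z : Fin n × Bool, F z ^ (1+τ/L))^k
      ≤ ∑ σ : Fin k → Bool, ∑ I : Fin k → Fin n, Qfun y (l+1) σ I := by
    have h1 : ∑ σ : Fin k → Bool, ∑ I : Fin k → Fin n,
        ((∏ r, F (I r, σ r)) - (1/((k:ℝ)*L))^(-(τ/L)) * ∏ r, F (I r, σ r) ^ (1+τ/L))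
        ≤ ∑ σ : Fin k → Bool, ∑ I : Fin k → Fin n, Qfun y (l+1) σ I :=
      Finset.sum_le_sum fun σ _ => Finset.sum_le_sum fun I _ => hlow σ I
    have h2 : ∑ σ : Fin k → Bool, ∑ I : Fin k → Fin n,
        ((∏ r, F (I r, σ r)) - (1/((k:ℝ)*L))^(-(τ/L)) * ∏ r, F (I r, σ r) ^ (1+τ/L))
        = (n:ℝ)^k
          - (1/((k:ℝ)*L))^(-(τ/L)) * (∑ z : Fin n × Bool, F z ^ (1+τ/L))^k := by
      calc ∑ σ : Fin k → Bool, ∑ I : Fin k → Fin n,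
            ((∏ r, F (I r, σ r)) - (1/((k:ℝ)*L))^(-(τ/L)) * ∏ r, F (I r, σ r) ^ (1+τ/L))
          = ∑ σ : Fin k → Bool, ((∑ I : Fin k → Fin n, ∏ r, F (I r, σ r))
              - (1/((k:ℝ)*L))^(-(τ/L)) * ∑ I : Fin k → Fin n, ∏ r, F (I r, σ r) ^ (1+τ/L)) :=
            Finset.sum_congr rfl fun σ _ => by
              rw [Finset.sum_sub_distrib, Finset.mul_sum]
        _ = (∑ σ : Fin k → Bool, ∑ I : Fin k → Fin n, ∏ r, F (I r, σ r))
              - (1/((k:ℝ)*L))^(-(τ/L))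
                * ∑ σ : Fin k → Bool, ∑ I : Fin k → Fin n, ∏ r, F (I r, σ r) ^ (1+τ/L) := by
            rw [Finset.sum_sub_distrib, Finset.mul_sum]
        _ = _ := by rw [hsum1, hsum2]
    linarith only [h1, h2.le, h2.symm.le]
  -- endgame
  have hD : (1-e4)*(β-1) - e4 ≤ βp := by
    have hd1 : (1-e4)*(β-1) ≤ β-1 := mul_le_of_le_one_left (by linarith) (by linarith)
    have hd2 : β ≤ βp := hβ.2
    linarith
  have hE0 : (0:ℝ) ≤ 1 - ((1-e4)*(β-1) - e4)/k := by
    have h1 : ((1-e4)*(β-1) - e4)/k ≤ βp/k := by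
      rw [div_le_div_iff_of_pos_right hkpos]
      exact hD
    have h2 : βp/k ≤ 1 := by
      rw [div_le_one hkpos]; exact hK5
    linarith only [h1, h2]
  have hsumznn : (0:ℝ) ≤ ∑ z : Fin n × Bool, F z ^ (1+τ/L) :=
    Finset.sum_nonneg fun z _ => Real.rpow_nonneg (hFnn z) _
  have hpow : (∑ z : Fin n × Bool, F z ^ (1+τ/L))^k
      ≤ ((n:ℝ) * (1 - ((1-e4)*(β-1) - e4)/k))^k := pow_le_pow_left₀ hsumznn hbase k
  have hdval : (1/((k:ℝ)*L))^(-(τ/L)) = Real.exp (τ + τ * Real.log L / L) := by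
    have hkL : (0:ℝ) < (k:ℝ)*L := by positivity
    rw [one_div, Real.inv_rpow hkL.le, Real.rpow_neg hkL.le, inv_inv,
      Real.rpow_def_of_pos hkL, Real.log_mul hk0 hL0]
    congr 1
    rw [hLdef]
    have hlk : Real.log (k:ℝ) ≠ 0 := hL0
    field_simp
  have hdbound : Real.exp (τ + τ * Real.log L / L) ≤ β * Real.exp e4 := by
    have hlogL0 : 0 ≤ Real.log L := Real.log_nonneg hL1
    have hsqrt : Real.log L ≤ 2 * Real.sqrt L := by
      have h1 : Real.log (Real.sqrt L) ≤ Real.sqrt L - 1 :=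
        Real.log_le_sub_one_of_pos (Real.sqrt_pos.2 hLpos)
      have h2 : Real.log (Real.sqrt L) = Real.log L / 2 := Real.log_sqrt hLpos.le
      linarith only [h1, h2]
    have hsL : 2*τ1/e4 ≤ Real.sqrt L := by
      have h3 := Real.sqrt_le_sqrt hK4
      rwa [Real.sqrt_sq (by positivity)] at h3
    have hsLpos : 0 < Real.sqrt L := Real.sqrt_pos.2 hLpos
    have hterm : τ * Real.log L / L ≤ e4 := by
      rw [div_le_iff₀ hLpos]
      have h3 : τ * Real.log L ≤ τ1 * (2*Real.sqrt L) :=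
        mul_le_mul hττ1 hsqrt hlogL0 hτ1nn
      have h4 : 2*τ1 ≤ e4*Real.sqrt L := by
        rw [div_le_iff₀ he4pos] at hsL
        linarith only [hsL]
      calc τ * Real.log L ≤ τ1 * (2*Real.sqrt L) := h3
        _ = (2*τ1) * Real.sqrt L := by ring
        _ ≤ (e4*Real.sqrt L) * Real.sqrt L := mul_le_mul_of_nonneg_right h4 hsLpos.le
        _ = e4 * L := by rw [mul_assoc, Real.mul_self_sqrt hLpos.le]
    calc Real.exp (τ + τ*Real.log L/L) ≤ Real.exp (τ + e4) :=
        Real.exp_le_exp.2 (by linarith only [hterm])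
      _ = β * Real.exp e4 := by rw [Real.exp_add, hτdef, Real.exp_log hβpos]
  have hEexp : (1 - ((1-e4)*(β-1) - e4)/k)^k
      ≤ Real.exp (-((1-e4)*(β-1) - e4)) := by
    have h1 : 1 - ((1-e4)*(β-1) - e4)/k ≤ Real.exp (-(((1-e4)*(β-1) - e4)/k)) := by
      have := Real.add_one_le_exp (-(((1-e4)*(β-1) - e4)/k)); linarith only [this]
    calc (1 - ((1-e4)*(β-1) - e4)/k)^k
        ≤ (Real.exp (-(((1-e4)*(β-1) - e4)/k)))^k := pow_le_pow_left₀ hE0 h1 k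
      _ = Real.exp (-((1-e4)*(β-1) - e4)) := by
          rw [← Real.exp_nat_mul]
          congr 1
          field_simp
  have hd0 : (0:ℝ) ≤ (1/((k:ℝ)*L))^(-(τ/L)) := Real.rpow_nonneg hδpos.le _
  have hEk0 : (0:ℝ) ≤ (1 - ((1-e4)*(β-1) - e4)/k)^k := pow_nonneg hE0 k
  have hprod : (1/((k:ℝ)*L))^(-(τ/L)) * (1 - ((1-e4)*(β-1) - e4)/k)^k
      ≤ β * Real.exp (-(β-1)) + ε := by
    have h1 : (1/((k:ℝ)*L))^(-(τ/L)) * (1 - ((1-e4)*(β-1) - e4)/k)^k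
        ≤ (β * Real.exp e4) * Real.exp (-((1-e4)*(β-1) - e4)) := by
      apply mul_le_mul (hdval ▸ hdbound) hEexp hEk0 (by positivity)
    have h2 : (β * Real.exp e4) * Real.exp (-((1-e4)*(β-1) - e4))
        = β * Real.exp (-(β-1)) * Real.exp (e4*(β+1)) := by
      rw [mul_assoc, mul_assoc, ← Real.exp_add, ← Real.exp_add]
      congr 1
      ring
    have h3 : Real.exp (e4*(β+1)) ≤ 1 + ε := by
      have h4 : e4*(β+1) ≤ e5 := by
        rw [he4def, div_mul_eq_mul_div, div_le_iff₀ (by linarith only [hβp1] : (0:ℝ) < βp + 2)]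
        exact mul_le_mul_of_nonneg_left (by linarith only [hβ.2] : β+1 ≤ βp+2) he5pos.le
      calc Real.exp (e4*(β+1)) ≤ Real.exp e5 := Real.exp_le_exp.2 h4
        _ ≤ Real.exp (Real.log (1+ε)) := Real.exp_le_exp.2 he5log
        _ = 1 + ε := Real.exp_log (by linarith)
    have h5 : β * Real.exp (-(β-1)) ≤ 1 := by
      have h6 : β ≤ Real.exp (β-1) := by
        have := Real.add_one_le_exp (β-1); linarith only [this]
      have h7 : Real.exp (β-1) * Real.exp (-(β-1)) = 1 := by
        rw [← Real.exp_add]; simp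
      have h6' := mul_le_mul_of_nonneg_right h6 (Real.exp_pos (-(β-1))).le
      rw [h7] at h6'
      exact h6'
    have h8 : (0:ℝ) ≤ β * Real.exp (-(β-1)) := by positivity
    calc (1/((k:ℝ)*L))^(-(τ/L)) * (1 - ((1-e4)*(β-1) - e4)/k)^k
        ≤ (β * Real.exp e4) * Real.exp (-((1-e4)*(β-1) - e4)) := h1
      _ = β * Real.exp (-(β-1)) * Real.exp (e4*(β+1)) := h2
      _ ≤ β * Real.exp (-(β-1)) * (1+ε) := mul_le_mul_of_nonneg_left h3 h8
      _ = β * Real.exp (-(β-1)) + β * Real.exp (-(β-1)) * ε := by ring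
      _ ≤ β * Real.exp (-(β-1)) + ε := by
          have h13 := mul_le_mul_of_nonneg_right h5 hε.le
          rw [one_mul] at h13
          linarith only [h13]
  -- assemble
  rw [hqsum]
  have hnk : (0:ℝ) < (n:ℝ)^k := by positivity
  rw [le_div_iff₀ hnk]
  have h9 : (1/((k:ℝ)*L))^(-(τ/L)) * (∑ z : Fin n × Bool, F z ^ (1+τ/L))^k
      ≤ (1/((k:ℝ)*L))^(-(τ/L))
        * ((n:ℝ)^k * (1 - ((1-e4)*(β-1) - e4)/k)^k) := by
    apply mul_le_mul_of_nonneg_left _ hd0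
    rw [← mul_pow]
    exact hpow
  have h10 : (1 - β * Real.exp (-(β-1)) - ε) * (n:ℝ)^k
      ≤ (n:ℝ)^k - ((1/((k:ℝ)*L))^(-(τ/L)) * (1 - ((1-e4)*(β-1) - e4)/k)^k) * (n:ℝ)^k := by
    have h11 : (1 - β * Real.exp (-(β-1)) - ε)
        ≤ 1 - (1/((k:ℝ)*L))^(-(τ/L)) * (1 - ((1-e4)*(β-1) - e4)/k)^k := by
      linarith only [hprod]
    have h11' := mul_le_mul_of_nonneg_right h11 hnk.le
    have h11'' : (1 - (1/((k:ℝ)*L))^(-(τ/L)) * (1 - ((1-e4)*(β-1) - e4)/k)^k) * (n:ℝ)^k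
        = (n:ℝ)^k - ((1/((k:ℝ)*L))^(-(τ/L)) * (1 - ((1-e4)*(β-1) - e4)/k)^k) * (n:ℝ)^k := by
      ring
    linarith only [h11', h11''.le, h11''.symm.le]
  have h12 : ((1/((k:ℝ)*L))^(-(τ/L)) * (1 - ((1-e4)*(β-1) - e4)/k)^k) * (n:ℝ)^k
      = (1/((k:ℝ)*L))^(-(τ/L)) * ((n:ℝ)^k * (1 - ((1-e4)*(β-1) - e4)/k)^k) := by ring
  linarith only [hTlow, h9, h10, h12.le, h12.symm.le]
end
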